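/- arXiv:0902.3643 — 9 statements merged into one kernel-verified Lean document; each statement's English description precedes it below -/
import Mathlib

section
/- Let ε = (ε₁, ε₂) be real numbers with ε₂ > 0 and ε₁ + ε₂ < -1, and let v = (v₁, v₂) ∈ ℝ². Set u₁ = v₁ + iε₁ and u₂ = v₂ + iε₂. Then the Fourier transform of the spread option payoff along the shifted contour equals the gamma-function expression: ∫_{ℝ²} e^{-i(u₁x₁ + u₂x₂)} · (e^{x₁} - e^{x₂} - 1)^+ dx₁ dx₂ = Γ(i(u₁+u₂)-1)·Γ(-iu₂)/Γ(iu₁+1). -/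
open MeasureTheory Set Filter Topology

namespace SpreadAux

lemma re_pos_ne_zero {w : ℂ} (hw : 0 < w.re) : w ≠ 0 := by
  intro h; rw [h] at hw; simp at hw

lemma cpow_eq_exp {r : ℝ} (hr : 0 < r) (w : ℂ) :
    (r : ℂ) ^ w = Complex.exp (w * Real.log r) := by
  rw [Complex.cpow_def_of_ne_zero (by exact_mod_cast hr.ne'),
    ← Complex.ofReal_log hr.le, mul_comm]

lemma integrableOn_cexp {w : ℂ} (hw : w.re < 0) (c : ℝ) :
    IntegrableOn (fun x : ℝ => Complex.exp (w * x)) (Ioi c) := by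
  refine (exp_neg_integrableOn_Ioi c (neg_pos.mpr hw)).mono'
    ((Complex.continuous_exp.comp
      (continuous_const.mul Complex.continuous_ofReal)).aestronglyMeasurable.restrict) ?_
  filter_upwards with x
  simp [Complex.norm_exp, Complex.mul_re]

lemma integral_cexp_Ioi {w : ℂ} (hw : w.re < 0) (c : ℝ) :
    ∫ x in Ioi c, Complex.exp (w * x) = -Complex.exp (w * c) / w := by
  have hw0 : w ≠ 0 := by intro h; rw [h] at hw; simp at hw
  have hderiv : ∀ x ∈ Ici c, HasDerivAt (fun x : ℝ => Complex.exp (w * x) / w)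
      (Complex.exp (w * x)) x := by
    intro x _
    have h1 : HasDerivAt (fun x : ℝ => w * (x : ℂ)) w x := by
      simpa using (Complex.ofRealCLM.hasDerivAt (x := x)).const_mul w
    simpa [mul_div_cancel_right₀ _ hw0] using h1.cexp.div_const w
  have htop : Tendsto (fun x : ℝ => Complex.exp (w * x) / w) atTop (𝓝 0) := by
    rw [tendsto_zero_iff_norm_tendsto_zero]
    have h2 : Tendsto (fun x : ℝ => w.re * x) atTop atBot := by
      have h := (tendsto_id (α := ℝ) (x := atTop)).const_mul_atTop (neg_pos.mpr hw)
      have := tendsto_neg_atTop_atBot.comp h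
      refine this.congr fun x => ?_
      simp [Function.comp]
    have h3 : Tendsto (fun x : ℝ => Real.exp (w.re * x) / ‖w‖) atTop (𝓝 0) := by
      simpa using (Real.tendsto_exp_atBot.comp h2).div_const ‖w‖
    refine h3.congr fun x => ?_
    simp [Complex.norm_exp, Complex.mul_re]
  have := integral_Ioi_of_hasDerivAt_of_tendsto' hderiv (integrableOn_cexp hw c) htop
  rw [this]; ring


lemma fpt {z : ℂ} {a x : ℝ} (hx : a < Real.exp x) :
    Complex.exp (-z * x) * ((max (Real.exp x - a) 0 : ℝ) : ℂ)
      = Complex.exp ((1 - z) * x) - (a : ℂ) * Complex.exp (-z * x) := by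
  rw [max_eq_left (by linarith)]
  push_cast
  rw [mul_sub, ← Complex.exp_add, mul_comm _ ((a : ℂ))]
  congr 2
  ring


lemma max_eq_zero_of_le {a x : ℝ} (hx : x ≤ Real.log a) (ha : 0 < a) :
    max (Real.exp x - a) 0 = 0 := by
  have : Real.exp x ≤ a := by
    calc Real.exp x ≤ Real.exp (Real.log a) := Real.exp_le_exp.mpr hx
    _ = a := Real.exp_log ha
  exact max_eq_right (by linarith)

lemma integrable_lemA {z : ℂ} (hz : 1 < z.re) {a : ℝ} (ha : 0 < a) :
    Integrable (fun x : ℝ => Complex.exp (-z * x) * ((max (Real.exp x - a) 0 : ℝ) : ℂ)) := by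
  have h1 : (1 - z).re < 0 := by simp; linarith
  have h2 : (-z).re < 0 := by simp; linarith
  have hint : IntegrableOn
      (fun x : ℝ => Complex.exp (-z * x) * ((max (Real.exp x - a) 0 : ℝ) : ℂ))
      (Ioi (Real.log a)) := by
    refine IntegrableOn.congr_fun
      (f := fun x : ℝ => Complex.exp ((1 - z) * x) - (a : ℂ) * Complex.exp (-z * x)) ?_
      (fun x hx => (fpt ((Real.log_lt_iff_lt_exp ha).mp hx)).symm) measurableSet_Ioi
    exact (integrableOn_cexp h1 (Real.log a)).sub
      ((integrableOn_cexp h2 (Real.log a)).const_mul (a : ℂ))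
  have heq : (fun x : ℝ => Complex.exp (-z * x) * ((max (Real.exp x - a) 0 : ℝ) : ℂ))
      = (Ioi (Real.log a)).indicator
        (fun x : ℝ => Complex.exp (-z * x) * ((max (Real.exp x - a) 0 : ℝ) : ℂ)) := by
    funext x
    by_cases hx : x ∈ Ioi (Real.log a)
    · rw [Set.indicator_of_mem hx]
    · rw [Set.indicator_of_notMem hx, max_eq_zero_of_le (by simpa using hx) ha]
      simp
  rw [heq, ← integrableOn_univ]
  exact (integrable_indicator_iff measurableSet_Ioi).mpr hint |>.integrableOn

lemma integral_lemA {z : ℂ} (hz : 1 < z.re) {a : ℝ} (ha : 0 < a) :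
    ∫ x : ℝ, Complex.exp (-z * x) * ((max (Real.exp x - a) 0 : ℝ) : ℂ)
      = Complex.exp ((1 - z) * Real.log a) / (z * (z - 1)) := by
  have h1 : (1 - z).re < 0 := by simp; linarith
  have h2 : (-z).re < 0 := by simp; linarith
  have hz0 : z ≠ 0 := by intro h; rw [h] at hz; simp at hz; linarith
  have hz1 : z - 1 ≠ 0 := by
    intro h; rw [sub_eq_zero] at h; rw [h] at hz; simp at hz
  set L := Real.log a with hL
  rw [← setIntegral_eq_integral_of_forall_compl_eq_zero
    (s := Ioi L) (fun x hx => by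
      rw [max_eq_zero_of_le (by simpa using hx) ha]; simp)]
  rw [setIntegral_congr_fun measurableSet_Ioi
    (g := fun x : ℝ => Complex.exp ((1 - z) * x) - (a : ℂ) * Complex.exp (-z * x))
    (fun x hx => fpt ((Real.log_lt_iff_lt_exp ha).mp hx))]
  rw [integral_sub (integrableOn_cexp h1 L)
    ((integrableOn_cexp h2 L).const_mul (a : ℂ)),
    integral_const_mul, integral_cexp_Ioi h1, integral_cexp_Ioi h2]
  have hac : (a : ℂ) = Complex.exp (L : ℂ) := by
    rw [← Complex.ofReal_exp, Real.exp_log ha]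
  have h1z : (1 : ℂ) - z ≠ 0 := by
    intro h; rw [sub_eq_zero] at h; rw [← h] at hz; simp at hz
  have key : Complex.exp ((L : ℝ) : ℂ) * Complex.exp (-z * L) = Complex.exp ((1 - z) * L) := by
    rw [← Complex.exp_add]; congr 1; ring
  rw [hac, neg_div_neg_eq, ← mul_div_assoc, key]
  field_simp
  ring

lemma integral_lemA_real {c : ℝ} (hc : c < -1) {a : ℝ} (ha : 0 < a) :
    ∫ x : ℝ, Real.exp (c * x) * max (Real.exp x - a) 0
      = Real.exp ((1 + c) * Real.log a) / (c * (c + 1)) := by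
  have hz : 1 < (-(c : ℂ)).re := by simp; linarith
  have h := integral_lemA hz ha
  have heq : (fun x : ℝ => ((Real.exp (c * x) * max (Real.exp x - a) 0 : ℝ) : ℂ))
      = fun x : ℝ => Complex.exp (-(-(c : ℂ)) * x) * ((max (Real.exp x - a) 0 : ℝ) : ℂ) := by
    funext x
    push_cast
    rw [neg_neg]
  have h2 : (∫ x : ℝ, ((Real.exp (c * x) * max (Real.exp x - a) 0 : ℝ) : ℂ))
      = ((Real.exp ((1 + c) * Real.log a) / (c * (c + 1)) : ℝ) : ℂ) := by
    rw [heq, h, Complex.ofReal_div, Complex.ofReal_exp]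
    push_cast
    rw [show (1 : ℂ) - -(c : ℂ) = 1 + c by ring,
      show -(c : ℂ) * (-(c : ℂ) - 1) = c * (c + 1) by ring]
  have h3 : ((∫ x : ℝ, Real.exp (c * x) * max (Real.exp x - a) 0 : ℝ) : ℂ)
      = ∫ x : ℝ, ((Real.exp (c * x) * max (Real.exp x - a) 0 : ℝ) : ℂ) := integral_ofReal.symm
  apply Complex.ofReal_injective
  rw [h3, h2]


lemma integrable_lemA_real {c : ℝ} (hc : c < -1) {a : ℝ} (ha : 0 < a) :
    Integrable (fun x : ℝ => Real.exp (c * x) * max (Real.exp x - a) 0) := by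
  have hz : 1 < (-(c : ℂ)).re := by simp; linarith
  have h := (integrable_lemA hz ha).norm
  refine h.congr (Filter.Eventually.of_forall fun x => ?_)
  simp [norm_mul, Complex.norm_exp, Complex.norm_real, Real.norm_eq_abs,
    abs_of_nonneg (le_max_right (Real.exp x - a) 0), Complex.mul_re]

lemma integrable_expRatio {p q : ℝ} (hp : 0 < p) (hq : p < q) :
    Integrable (fun x : ℝ => Real.exp (p * x - q * Real.log (1 + Real.exp x))) := by
  have h0 : ∀ x : ℝ, (0 : ℝ) < 1 + Real.exp x := fun x => by positivity
  set g : ℝ → ℝ := fun x => Real.exp (p * x - q * max x 0) with hg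
  have hIic : IntegrableOn g (Iic (0 : ℝ)) := by
    have h1 : Integrable ((Iic (0 : ℝ)).indicator Real.exp) :=
      (integrable_indicator_iff measurableSet_Iic).mpr (integrableOn_exp_Iic 0)
    have h2 : Integrable (fun x : ℝ => (Iic (0 : ℝ)).indicator Real.exp (p * x)) :=
      h1.comp_mul_left' hp.ne'
    have h3 : Integrable ((Iic (0 : ℝ)).indicator fun x : ℝ => Real.exp (p * x)) := by
      refine h2.congr (Filter.Eventually.of_forall fun x => ?_)
      have hiff : p * x ≤ 0 ↔ x ≤ 0 := by constructor <;> intro h <;> nlinarith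
      by_cases hx : x ≤ 0 <;> simp [Set.indicator_apply, hx, hiff]
    have h4 : IntegrableOn (fun x : ℝ => Real.exp (p * x)) (Iic (0 : ℝ)) :=
      (integrable_indicator_iff measurableSet_Iic).mp h3
    exact h4.congr_fun (fun x hx => by
      simp only [hg]; rw [max_eq_right (hx : x ≤ (0:ℝ))]; ring_nf) measurableSet_Iic
  have hIoi : IntegrableOn g (Ioi (0 : ℝ)) := by
    refine (exp_neg_integrableOn_Ioi 0 (show (0:ℝ) < q - p by linarith)).congr_fun
      (fun x hx => ?_) measurableSet_Ioi
    simp only [hg]; rw [max_eq_left (le_of_lt hx)]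
    congr 1; ring
  have hgint : Integrable g := by
    rw [← integrableOn_univ, ← Set.Iic_union_Ioi (a := (0 : ℝ))]
    exact hIic.union hIoi
  refine hgint.mono' ?_ (Filter.Eventually.of_forall fun x => ?_)
  · refine (Real.continuous_exp.comp ?_).aestronglyMeasurable
    exact (continuous_const.mul continuous_id).sub (continuous_const.mul
      ((continuous_const.add Real.continuous_exp).log fun x => (h0 x).ne'))
  · rw [Real.norm_eq_abs, Real.abs_exp, hg]
    apply Real.exp_le_exp.mpr
    have hmax : max x 0 ≤ Real.log (1 + Real.exp x) := by
      refine max_le ?_ (Real.log_nonneg (by linarith [Real.exp_pos x]))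
      calc x = Real.log (Real.exp x) := (Real.log_exp x).symm
      _ ≤ Real.log (1 + Real.exp x) := Real.log_le_log (Real.exp_pos x) (by linarith)
    have := mul_le_mul_of_nonneg_left hmax (by linarith : (0:ℝ) ≤ q)
    linarith


lemma phi_image : (fun t : ℝ => Real.exp t / (1 + Real.exp t)) '' univ = Ioo (0 : ℝ) 1 := by
  ext x
  simp only [image_univ, mem_range, mem_Ioo]
  constructor
  · rintro ⟨t, rfl⟩
    have h0 : (0 : ℝ) < 1 + Real.exp t := by positivity
    exact ⟨by positivity, (div_lt_one h0).mpr (by linarith [Real.exp_pos t])⟩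
  · rintro ⟨hx0, hx1⟩
    refine ⟨Real.log (x / (1 - x)), ?_⟩
    have h1 : (0 : ℝ) < 1 - x := by linarith
    have h2 : (0 : ℝ) < x / (1 - x) := by positivity
    rw [Real.exp_log h2]
    have h3 : 1 + x / (1 - x) = 1 / (1 - x) := by field_simp; ring
    rw [h3]
    field_simp

lemma phi_deriv (t : ℝ) : HasDerivAt (fun t : ℝ => Real.exp t / (1 + Real.exp t))
    (Real.exp t / (1 + Real.exp t) ^ 2) t := by
  have h0 : (0 : ℝ) < 1 + Real.exp t := by positivity
  have h := (Real.hasDerivAt_exp t).div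
    ((hasDerivAt_const t (1 : ℝ)).add (Real.hasDerivAt_exp t)) h0.ne'
  refine h.congr_deriv ?_
  simp only [Pi.add_apply]
  ring

lemma phi_inj : InjOn (fun t : ℝ => Real.exp t / (1 + Real.exp t)) univ := by
  intro t₁ _ t₂ _ h
  simp only at h
  have h1 : (0 : ℝ) < 1 + Real.exp t₁ := by positivity
  have h2 : (0 : ℝ) < 1 + Real.exp t₂ := by positivity
  rw [div_eq_div_iff h1.ne' h2.ne'] at h
  have h3 : Real.exp t₁ = Real.exp t₂ := by nlinarith [h]
  exact Real.exp_injective h3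

lemma integral_lemB {a b : ℂ} (ha : 0 < a.re) (hb : 0 < b.re) :
    ∫ x : ℝ, Complex.exp (a * x - (a + b) * Real.log (1 + Real.exp x))
      = Complex.Gamma a * Complex.Gamma b / Complex.Gamma (a + b) := by
  have hG := Complex.Gamma_mul_Gamma_eq_betaIntegral ha hb
  have hGne : Complex.Gamma (a + b) ≠ 0 :=
    Complex.Gamma_ne_zero_of_re_pos (by rw [Complex.add_re]; linarith)
  have key : (∫ x : ℝ, Complex.exp (a * x - (a + b) * Real.log (1 + Real.exp x)))
      = Complex.betaIntegral a b := by
    have hch := integral_image_eq_integral_abs_deriv_smul MeasurableSet.univ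
      (fun t (_ : t ∈ univ) => (phi_deriv t).hasDerivWithinAt) phi_inj
      (fun x : ℝ => (x : ℂ) ^ (a - 1) * (1 - (x : ℂ)) ^ (b - 1))
    rw [phi_image] at hch
    rw [Complex.betaIntegral, intervalIntegral.integral_of_le zero_le_one,
      integral_Ioc_eq_integral_Ioo, hch, setIntegral_univ]
    refine integral_congr_ae (Filter.Eventually.of_forall fun t => ?_)
    have hE : (0 : ℝ) < Real.exp t := Real.exp_pos t
    have hD : (0 : ℝ) < 1 + Real.exp t := by positivity
    set E := Real.exp t with hEdef
    set D := 1 + Real.exp t with hDdef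
    set L := Real.log D with hLdef
    have hphi : (0 : ℝ) < E / D := by positivity
    have hphi2 : (0 : ℝ) < 1 / D := by positivity
    have h1m : (1 : ℂ) - ((E / D : ℝ) : ℂ) = ((1 / D : ℝ) : ℂ) := by
      have h9 : (1 : ℝ) - E / D = 1 / D := by
        rw [hDdef, hEdef]
        field_simp
        ring
      rw [← h9]
      push_cast
      ring
    have hd' : |E / D ^ 2| = E / D ^ 2 := abs_of_pos (by positivity)
    have hlog1 : Real.log (E / D) = t - L := by
      rw [Real.log_div hE.ne' hD.ne', Real.log_exp]
    have hlog2 : Real.log (1 / D) = -L := by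
      rw [Real.log_div one_ne_zero hD.ne', Real.log_one, zero_sub]
    have hd2 : E / D ^ 2 = Real.exp (t - 2 * L) := by
      rw [Real.exp_sub, two_mul, Real.exp_add, Real.exp_log hD, sq]
    simp only [hd', Complex.real_smul]
    rw [cpow_eq_exp hphi, h1m, cpow_eq_exp hphi2, hlog1, hlog2, hd2,
      abs_of_pos (Real.exp_pos (t - 2 * L)), Complex.ofReal_exp, ← Complex.exp_add, ← Complex.exp_add]
    congr 1
    push_cast
    ring
  rw [key, hG, mul_div_cancel_left₀ _ hGne]

end SpreadAux


set_option maxHeartbeats 2000000 in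
open SpreadAux Complex in
/-- The Fourier transform of the spread option payoff `(e^{x₁} - e^{x₂} - 1)⁺` along the
shifted contour `u = v + iε` (with ε₂ > 0, ε₁ + ε₂ < -1) equals
`Γ(i(u₁+u₂)-1)·Γ(-iu₂)/Γ(iu₁+1)`. -/
theorem spread_payoff_fourier_transform
    (ε₁ ε₂ : ℝ) (hε₂ : 0 < ε₂) (hε : ε₁ + ε₂ < -1) (v₁ v₂ : ℝ) :
    (∫ x : ℝ × ℝ,
        Complex.exp (-Complex.I *
            (((v₁ : ℂ) + Complex.I * (ε₁ : ℂ)) * (x.1 : ℂ) +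
              ((v₂ : ℂ) + Complex.I * (ε₂ : ℂ)) * (x.2 : ℂ))) *
          ((max (Real.exp x.1 - Real.exp x.2 - 1) 0 : ℝ) : ℂ)) =
      Complex.Gamma
          (Complex.I *
              (((v₁ : ℂ) + Complex.I * (ε₁ : ℂ)) + ((v₂ : ℂ) + Complex.I * (ε₂ : ℂ))) - 1) *
        Complex.Gamma (-Complex.I * ((v₂ : ℂ) + Complex.I * (ε₂ : ℂ))) /
        Complex.Gamma (Complex.I * ((v₁ : ℂ) + Complex.I * (ε₁ : ℂ)) + 1) := by
  have hε₁ : ε₁ < -1 := by linarith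
  set u₁ : ℂ := (v₁ : ℂ) + Complex.I * (ε₁ : ℂ) with hu₁
  set u₂ : ℂ := (v₂ : ℂ) + Complex.I * (ε₂ : ℂ) with hu₂
  set z : ℂ := Complex.I * u₁ with hzdef
  set A : ℂ := -Complex.I * u₂ with hAdef
  set B : ℂ := Complex.I * u₁ + Complex.I * u₂ - 1 with hBdef
  have hzre : z.re = -ε₁ := by
    simp [hzdef, hu₁, Complex.mul_re, Complex.mul_im]
  have hAre : A.re = ε₂ := by
    simp [hAdef, hu₂, Complex.mul_re, Complex.mul_im]
  have hBre : B.re = -ε₁ - ε₂ - 1 := by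
    simp [hBdef, hu₁, hu₂, Complex.mul_re, Complex.mul_im]
    ring
  have hz : 1 < z.re := by rw [hzre]; linarith
  have ha' : 0 < A.re := by rw [hAre]; linarith
  have hb' : 0 < B.re := by rw [hBre]; linarith
  set F : ℝ × ℝ → ℂ := fun p =>
    Complex.exp (-Complex.I * (u₁ * p.1 + u₂ * p.2)) *
      ((max (Real.exp p.1 - Real.exp p.2 - 1) 0 : ℝ) : ℂ) with hFdef
  have hFeq : ∀ p : ℝ × ℝ, F p = Complex.exp (A * p.2) *
      (Complex.exp (-z * p.1) * ((max (Real.exp p.1 - (1 + Real.exp p.2)) 0 : ℝ) : ℂ)) := by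
    intro p
    rw [hFdef]
    simp only
    rw [show Real.exp p.1 - Real.exp p.2 - 1 = Real.exp p.1 - (1 + Real.exp p.2) by ring,
      ← mul_assoc, ← Complex.exp_add]
    congr 2
    rw [hAdef, hzdef]
    ring
  have hnorm : ∀ p : ℝ × ℝ, ‖F p‖ = Real.exp (ε₂ * p.2) *
      (Real.exp (ε₁ * p.1) * max (Real.exp p.1 - (1 + Real.exp p.2)) 0) := by
    intro p
    have r1 : (A * (p.2 : ℂ)).re = ε₂ * p.2 := by simp [Complex.mul_re, hAre]
    have r2 : (-z * (p.1 : ℂ)).re = ε₁ * p.1 := by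
      simp [Complex.mul_re, Complex.neg_re, hzre]
    rw [hFeq p]
    simp only [norm_mul, Complex.norm_exp, Complex.norm_real, Real.norm_eq_abs, r1, r2]
    rw [_root_.abs_of_nonneg (le_max_right (Real.exp p.1 - (1 + Real.exp p.2)) (0:ℝ))]
  have hcont : Continuous F := by
    rw [hFdef]
    apply Continuous.mul
    · apply Complex.continuous_exp.comp
      fun_prop
    · apply Complex.continuous_ofReal.comp
      exact (((Real.continuous_exp.comp continuous_fst).sub
        (Real.continuous_exp.comp continuous_snd)).sub continuous_const).max continuous_const
  have hF : Integrable F (volume.prod volume) := by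
    rw [integrable_prod_iff' hcont.aestronglyMeasurable]
    constructor
    · refine Filter.Eventually.of_forall fun y => ?_
      have base := integrable_lemA hz (show (0:ℝ) < 1 + Real.exp y by positivity)
      exact (base.const_mul (Complex.exp (A * y))).congr
        (Filter.Eventually.of_forall fun x => (hFeq (x, y)).symm)
    · have hval : ∀ y : ℝ, (∫ x : ℝ, ‖F (x, y)‖)
          = Real.exp (ε₂ * y + (1 + ε₁) * Real.log (1 + Real.exp y)) * (1 / (ε₁ * (ε₁ + 1))) := by
        intro y
        have hpos : (0:ℝ) < 1 + Real.exp y := by positivity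
        calc (∫ x : ℝ, ‖F (x, y)‖)
            = ∫ x : ℝ, Real.exp (ε₂ * y) *
              (Real.exp (ε₁ * x) * max (Real.exp x - (1 + Real.exp y)) 0) :=
              integral_congr_ae (Filter.Eventually.of_forall fun x => hnorm (x, y))
          _ = Real.exp (ε₂ * y) *
              ∫ x : ℝ, Real.exp (ε₁ * x) * max (Real.exp x - (1 + Real.exp y)) 0 :=
              integral_const_mul _ _
          _ = Real.exp (ε₂ * y) *
              (Real.exp ((1 + ε₁) * Real.log (1 + Real.exp y)) / (ε₁ * (ε₁ + 1))) := by
              rw [integral_lemA_real hε₁ hpos]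
          _ = _ := by rw [Real.exp_add]; ring
      have hexp : Integrable (fun y : ℝ =>
          Real.exp (ε₂ * y + (1 + ε₁) * Real.log (1 + Real.exp y))) := by
        have h := integrable_expRatio hε₂ (show ε₂ < -(1 + ε₁) by linarith)
        have he : (fun y : ℝ => Real.exp (ε₂ * y - -(1 + ε₁) * Real.log (1 + Real.exp y)))
            = fun y : ℝ => Real.exp (ε₂ * y + (1 + ε₁) * Real.log (1 + Real.exp y)) := by
          funext y
          congr 1
          ring
        rwa [he] at h
      simp only [hval]
      exact hexp.mul_const _
  have hinner : ∀ y : ℝ, (∫ x : ℝ, F (x, y))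
      = Complex.exp (A * y - (A + B) * Real.log (1 + Real.exp y)) * (1 / (z * (z - 1))) := by
    intro y
    have hpos : (0:ℝ) < 1 + Real.exp y := by positivity
    calc (∫ x : ℝ, F (x, y))
        = ∫ x : ℝ, Complex.exp (A * y) *
          (Complex.exp (-z * x) * ((max (Real.exp x - (1 + Real.exp y)) 0 : ℝ) : ℂ)) :=
          integral_congr_ae (Filter.Eventually.of_forall fun x => hFeq (x, y))
      _ = Complex.exp (A * y) *
          ∫ x : ℝ, Complex.exp (-z * x) * ((max (Real.exp x - (1 + Real.exp y)) 0 : ℝ) : ℂ) :=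
          integral_const_mul _ _
      _ = Complex.exp (A * y) *
          (Complex.exp ((1 - z) * Real.log (1 + Real.exp y)) / (z * (z - 1))) := by
          rw [integral_lemA hz hpos]
      _ = _ := by
          rw [div_eq_mul_one_div, ← mul_assoc, ← Complex.exp_add]
          congr 2
          rw [hAdef, hBdef, hzdef]
          ring
  have hzne : z ≠ 0 := re_pos_ne_zero (by rw [hzre]; linarith)
  have hzsubre : (z - 1).re = -ε₁ - 1 := by
    rw [Complex.sub_re, hzre, Complex.one_re]
  have hz1ne : z - 1 ≠ 0 := re_pos_ne_zero (by rw [hzsubre]; linarith)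
  have hGz1ne : Complex.Gamma (z - 1) ≠ 0 :=
    Complex.Gamma_ne_zero_of_re_pos (by rw [hzsubre]; linarith)
  have hGz : Complex.Gamma (z + 1) = z * (z - 1) * Complex.Gamma (z - 1) := by
    have e1 := Complex.Gamma_add_one (z - 1) hz1ne
    rw [sub_add_cancel] at e1
    rw [Complex.Gamma_add_one z hzne, e1]
    ring
  calc (∫ p : ℝ × ℝ, F p)
      = ∫ y : ℝ, ∫ x : ℝ, F (x, y) := by
        rw [MeasureTheory.Measure.volume_eq_prod]
        exact integral_prod_symm F hF
    _ = ∫ y : ℝ, Complex.exp (A * y - (A + B) * Real.log (1 + Real.exp y))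
          * (1 / (z * (z - 1))) :=
        integral_congr_ae (Filter.Eventually.of_forall hinner)
    _ = (∫ y : ℝ, Complex.exp (A * y - (A + B) * Real.log (1 + Real.exp y)))
          * (1 / (z * (z - 1))) := integral_mul_const _ _
    _ = (Complex.Gamma A * Complex.Gamma B / Complex.Gamma (A + B)) * (1 / (z * (z - 1))) := by
        rw [integral_lemB ha' hb']
    _ = Complex.Gamma (Complex.I * (u₁ + u₂) - 1) * Complex.Gamma (-Complex.I * u₂) /
          Complex.Gamma (Complex.I * u₁ + 1) := by
        rw [show Complex.I * (u₁ + u₂) - 1 = B by rw [hBdef]; ring,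
          show Complex.I * u₁ + 1 = z + 1 by rw [hzdef],
          show A + B = z - 1 by rw [hAdef, hBdef, hzdef]; ring,
          ← hAdef, hGz]
        have hGAne : Complex.Gamma A ≠ 0 := Complex.Gamma_ne_zero_of_re_pos ha'
        field_simp
end

section
/- Let ε = (ε₁, ε₂) be real numbers with ε₂ > 0 and ε₁ + ε₂ < -1. Then the function x = (x₁,x₂) ↦ e^{ε₁x₁ + ε₂x₂} · (e^{x₁} - e^{x₂} - 1)^+ is integrable on ℝ² (belongs to L¹(ℝ²)). -/
open MeasureTheory Set Real

lemma exp_mul_integrableOn_Iic' {c : ℝ} (hc : 0 < c) (a : ℝ) :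
    IntegrableOn (fun y : ℝ => Real.exp (c * y)) (Iic a) := by
  rw [← (Measure.measurePreserving_neg (volume : Measure ℝ)).integrableOn_comp_preimage
      (Homeomorph.neg ℝ).measurableEmbedding]
  simp only [Function.comp_def, neg_preimage, neg_Iic, mul_neg, ← neg_mul]
  exact (integrableOn_Ici_iff_integrableOn_Ioi).mpr (exp_neg_integrableOn_Ioi _ hc)

lemma exp_mul_integrableOn_Ioi' {c : ℝ} (hc : c < 0) (a : ℝ) :
    IntegrableOn (fun y : ℝ => Real.exp (c * y)) (Ioi a) := by
  have := exp_neg_integrableOn_Ioi a (neg_pos.mpr hc)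
  simpa using this

/-- For ε₂ > 0 and ε₁ + ε₂ < -1, the function
`x ↦ e^{ε₁x₁ + ε₂x₂} · (e^{x₁} - e^{x₂} - 1)⁺` is in L¹(ℝ²). -/
theorem spread_payoff_exp_weight_integrable
    (ε₁ ε₂ : ℝ) (hε₂ : 0 < ε₂) (hε : ε₁ + ε₂ < -1) :
    Integrable
      (fun x : ℝ × ℝ =>
        Real.exp (ε₁ * x.1 + ε₂ * x.2) * max (Real.exp x.1 - Real.exp x.2 - 1) 0)
      (volume : Measure (ℝ × ℝ)) := by
  set s : ℝ := (ε₂ - ε₁ - 1) / 2 with hs_def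
  have hs_pos : 0 < s := by simp only [hs_def]; linarith
  have hs_gt : ε₂ < s := by simp only [hs_def]; linarith
  have hs_lt : ε₁ + 1 + s < 0 := by simp only [hs_def]; linarith
  set h₁ : ℝ → ℝ := Set.indicator (Ioi 0) (fun t => Real.exp ((ε₁ + 1 + s) * t)) with hh₁
  set h₂ : ℝ → ℝ := fun y => min (Real.exp (ε₂ * y)) (Real.exp ((ε₂ - s) * y)) with hh₂
  have hint₁ : Integrable h₁ (volume : Measure ℝ) := by
    rw [hh₁, integrable_indicator_iff measurableSet_Ioi]
    exact exp_mul_integrableOn_Ioi' hs_lt 0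
  have h₂meas : AEStronglyMeasurable h₂ (volume : Measure ℝ) :=
    (((Real.continuous_exp.comp (continuous_const.mul continuous_id)).min
      (Real.continuous_exp.comp (continuous_const.mul continuous_id)))).aestronglyMeasurable
  have hint₂ : Integrable h₂ (volume : Measure ℝ) := by
    rw [← integrableOn_univ, ← Iic_union_Ioi (a := (0 : ℝ)), integrableOn_union]
    constructor
    · refine Integrable.mono' (exp_mul_integrableOn_Iic' hε₂ 0) h₂meas.restrict ?_
      filter_upwards with y
      rw [Real.norm_eq_abs, abs_of_pos (lt_min (Real.exp_pos _) (Real.exp_pos _))]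
      exact min_le_left _ _
    · refine Integrable.mono' (exp_mul_integrableOn_Ioi' (show ε₂ - s < 0 by linarith) 0) h₂meas.restrict ?_
      filter_upwards with y
      rw [Real.norm_eq_abs, abs_of_pos (lt_min (Real.exp_pos _) (Real.exp_pos _))]
      exact min_le_right _ _
  have hg : Integrable (fun x : ℝ × ℝ => h₁ x.1 * h₂ x.2) (volume : Measure (ℝ × ℝ)) := by
    have := hint₁.mul_prod hint₂
    simpa [Measure.volume_eq_prod] using this
  refine hg.mono' ?_ ?_
  · apply Continuous.aestronglyMeasurable
    exact (Real.continuous_exp.comp (by fun_prop)).mul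
      ((((Real.continuous_exp.comp continuous_fst).sub
        (Real.continuous_exp.comp continuous_snd)).sub continuous_const).max continuous_const)
  · filter_upwards with x
    rw [Real.norm_eq_abs, abs_of_nonneg (mul_nonneg (Real.exp_pos _).le (le_max_right _ _))]
    rcases le_or_gt (Real.exp x.1 - Real.exp x.2 - 1) 0 with hd | hd
    · rw [max_eq_right hd, mul_zero]
      exact mul_nonneg (Set.indicator_nonneg (fun _ _ => (Real.exp_pos _).le) _)
        (le_min (Real.exp_pos _).le (Real.exp_pos _).le)
    · have hx1 : 0 < x.1 := by
        have h1 : (1 : ℝ) < Real.exp x.1 := by linarith [Real.exp_pos x.2]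
        simpa using Real.exp_lt_exp.mp (by simpa using h1)
      have hx21 : x.2 < x.1 := Real.exp_lt_exp.mp (by linarith)
      have hh1 : h₁ x.1 = Real.exp ((ε₁ + 1 + s) * x.1) := Set.indicator_of_mem hx1 _
      rw [hh1, hh₂]
      calc Real.exp (ε₁ * x.1 + ε₂ * x.2) * max (Real.exp x.1 - Real.exp x.2 - 1) 0
          ≤ Real.exp (ε₁ * x.1 + ε₂ * x.2) * Real.exp x.1 := by
            apply mul_le_mul_of_nonneg_left _ (Real.exp_pos _).le
            exact max_le (by linarith [Real.exp_pos x.2]) (Real.exp_pos x.1).le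
        _ = Real.exp ((ε₁ + 1) * x.1 + ε₂ * x.2) := by rw [← Real.exp_add]; ring_nf
        _ ≤ min (Real.exp ((ε₁ + 1 + s) * x.1 + ε₂ * x.2))
              (Real.exp ((ε₁ + 1 + s) * x.1 + (ε₂ - s) * x.2)) := by
            refine le_min (Real.exp_le_exp.mpr ?_) (Real.exp_le_exp.mpr ?_) <;> nlinarith
        _ = Real.exp ((ε₁ + 1 + s) * x.1) *
              min (Real.exp (ε₂ * x.2)) (Real.exp ((ε₂ - s) * x.2)) := by
            rw [mul_min_of_nonneg _ _ (Real.exp_pos _).le, ← Real.exp_add, ← Real.exp_add]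
end

section
/- Let ε = (ε₁, ε₂) be real numbers with ε₂ > 0 and ε₁ + ε₂ < -1. Then the function x = (x₁,x₂) ↦ e^{ε₁x₁ + ε₂x₂} · (e^{x₁} - e^{x₂} - 1)^+ is square integrable on ℝ² (belongs to L²(ℝ²)). -/
open MeasureTheory

/-- `exp (-a * |x|)` is integrable on `ℝ` for `a > 0`. -/
lemma integrable_exp_neg_mul_abs' {a : ℝ} (ha : 0 < a) :
    Integrable (fun x : ℝ => Real.exp (-a * |x|)) := by
  have hIoi : IntegrableOn (fun x : ℝ => Real.exp (-a * |x|)) (Set.Ioi 0) := by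
    refine (exp_neg_integrableOn_Ioi 0 ha).congr_fun (fun x hx => ?_) measurableSet_Ioi
    rw [abs_of_pos hx]
  have hIic : IntegrableOn (fun x : ℝ => Real.exp (-a * |x|)) (Set.Iic 0) := by
    rw [← Measure.map_neg_eq_self (volume : Measure ℝ)]
    have m : MeasurableEmbedding fun x : ℝ => -x := (Homeomorph.neg ℝ).measurableEmbedding
    rw [m.integrableOn_map_iff]
    simp_rw [Function.comp_def, abs_neg, Set.neg_preimage, Set.neg_Iic, neg_zero]
    exact Iff.mpr integrableOn_Ici_iff_integrableOn_Ioi hIoi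
  have := hIic.union hIoi
  rwa [Set.Iic_union_Ioi, integrableOn_univ] at this

/-- For ε₂ > 0 and ε₁ + ε₂ < -1, the function
`x ↦ e^{ε₁x₁ + ε₂x₂} · (e^{x₁} - e^{x₂} - 1)⁺` is in L²(ℝ²). -/
theorem spread_payoff_exp_weight_memL2
    (ε₁ ε₂ : ℝ) (hε₂ : 0 < ε₂) (hε : ε₁ + ε₂ < -1) :
    MemLp
      (fun x : ℝ × ℝ =>
        Real.exp (ε₁ * x.1 + ε₂ * x.2) * max (Real.exp x.1 - Real.exp x.2 - 1) 0)
      2 (volume : Measure (ℝ × ℝ)) := by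
  set b : ℝ := -(ε₁ + ε₂ + 1) / 2 with hb_def
  have hb : 0 < b := by simp only [hb_def]; linarith
  set c : ℝ := min ε₂ b with hc_def
  have hc : 0 < c := lt_min hε₂ hb
  have hcε₂ : c ≤ ε₂ := min_le_left _ _
  have hcb : c ≤ b := min_le_right _ _
  -- the dominating function
  set G : ℝ × ℝ → ℝ := fun x => Real.exp (-c * |x.1|) * Real.exp (-c * |x.2|) with hG_def
  have hG_meas : AEStronglyMeasurable G (volume : Measure (ℝ × ℝ)) := by
    apply Continuous.aestronglyMeasurable
    fun_prop
  have hG_mem : MemLp G 2 (volume : Measure (ℝ × ℝ)) := by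
    rw [memLp_two_iff_integrable_sq hG_meas]
    have : (fun x : ℝ × ℝ => G x ^ 2)
        = fun x : ℝ × ℝ => Real.exp (-(2*c) * |x.1|) * Real.exp (-(2*c) * |x.2|) := by
      funext x
      simp only [hG_def]
      rw [mul_pow, sq, sq, ← Real.exp_add, ← Real.exp_add]
      congr 1 <;> ring_nf
    rw [this, MeasureTheory.Measure.volume_eq_prod]
    exact (integrable_exp_neg_mul_abs' (by linarith)).mul_prod
      (integrable_exp_neg_mul_abs' (by linarith))
  refine hG_mem.of_le ?_ ?_
  · apply Continuous.aestronglyMeasurable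
    fun_prop
  · filter_upwards with x
    have hGpos : 0 < G x := mul_pos (Real.exp_pos _) (Real.exp_pos _)
    have hfnn : 0 ≤ Real.exp (ε₁ * x.1 + ε₂ * x.2) * max (Real.exp x.1 - Real.exp x.2 - 1) 0 :=
      mul_nonneg (Real.exp_pos _).le (le_max_right _ _)
    rw [Real.norm_of_nonneg hfnn, Real.norm_of_nonneg hGpos.le]
    rcases le_or_gt (Real.exp x.1 - Real.exp x.2 - 1) 0 with h0 | h0
    · rw [max_eq_right h0, mul_zero]; exact hGpos.le
    · rw [max_eq_left h0.le]
      -- on the support: x.1 > 0 and x.2 < x.1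
      have hx1 : 0 < x.1 := by
        have h1 : (1 : ℝ) < Real.exp x.1 := by
          have := Real.exp_pos x.2; linarith
        exact (Real.exp_lt_exp.mp (by rwa [Real.exp_zero]))
      have hx21 : x.2 < x.1 := by
        apply Real.exp_lt_exp.mp
        have := Real.exp_pos x.2; linarith
      have key : Real.exp (ε₁ * x.1 + ε₂ * x.2) * (Real.exp x.1 - Real.exp x.2 - 1)
          ≤ Real.exp (ε₁ * x.1 + ε₂ * x.2 + x.1) := by
        rw [Real.exp_add (ε₁ * x.1 + ε₂ * x.2) x.1]
        have h2 : Real.exp x.1 - Real.exp x.2 - 1 ≤ Real.exp x.1 := by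
          have := Real.exp_pos x.2; linarith
        exact mul_le_mul_of_nonneg_left h2 (Real.exp_pos _).le
      refine key.trans ?_
      simp only [hG_def]
      rw [← Real.exp_add]
      apply Real.exp_le_exp.mpr
      have hax1 : |x.1| = x.1 := abs_of_pos hx1
      rcases le_or_gt x.2 0 with h2 | h2
      · rw [hax1, abs_of_nonpos h2]
        nlinarith [mul_nonneg (show (0:ℝ) ≤ ε₂ - c by linarith) (neg_nonneg.mpr h2),
          mul_pos (show (0:ℝ) < -(ε₁ + 1 + c) by linarith) hx1]
      · rw [hax1, abs_of_pos h2]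
        nlinarith [mul_le_mul_of_nonneg_left hx21.le (show (0:ℝ) ≤ ε₂ + b by linarith),
          mul_le_mul_of_nonneg_right hcb (le_of_lt h2),
          mul_le_mul_of_nonneg_right hcb hx1.le]
end

section
/- Let x₁ > 0 be real and let u₂ ∈ ℂ with Im(u₂) > 0. Then ∫_{-∞}^{log(e^{x₁}-1)} e^{-iu₂x₂} · ((e^{x₁}-1) - e^{x₂}) dx₂ = (e^{x₁}-1)^{1-iu₂} · (1/(-iu₂) - 1/(1-iu₂)), where (e^{x₁}-1)^{1-iu₂} denotes the complex power of the positive real number e^{x₁}-1. -/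
open MeasureTheory Set

lemma integrableOn_rexp_Iic {k : ℝ} (hk : 0 < k) (a : ℝ) :
    IntegrableOn (fun x : ℝ => Real.exp (k * x)) (Iic a) := by
  have h : IntegrableOn (fun x : ℝ => Real.exp (-(k * x))) (Ioi (-a)) := by
    simpa [neg_mul] using exp_neg_integrableOn_Ioi (-a) hk
  have h2 : Integrable ((Ioi (-a)).indicator (fun x : ℝ => Real.exp (-(k * x)))) := by
    rwa [integrable_indicator_iff measurableSet_Ioi]
  have h3 := h2.comp_neg
  have h4 : (fun t : ℝ => ((Ioi (-a)).indicator (fun x : ℝ => Real.exp (-(k * x)))) (-t))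
      = (Iio a).indicator (fun x : ℝ => Real.exp (k * x)) := by
    ext x
    by_cases hx : x < a <;>
      simp [Set.indicator, hx, neg_lt, show (-a < -x) ↔ (x < a) by constructor <;> intro <;> linarith]
  rw [h4] at h3
  have h5 : IntegrableOn (fun x : ℝ => Real.exp (k * x)) (Iio a) := by
    rwa [← integrable_indicator_iff measurableSet_Iio]
  rw [IntegrableOn, ← restrict_Iio_eq_restrict_Iic]
  exact h5

lemma integrableOn_cexp_Iic {c : ℂ} (hc : 0 < c.re) (a : ℝ) :
    IntegrableOn (fun x : ℝ => Complex.exp (c * x)) (Iic a) := by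
  refine (integrableOn_rexp_Iic hc a).mono' ?_ ?_
  · exact (Complex.continuous_exp.comp (by continuity)).aestronglyMeasurable
  · filter_upwards with x
    rw [Complex.norm_exp]
    simp [Complex.mul_re]

lemma integral_cexp_Iio {c : ℂ} (hc : 0 < c.re) (a : ℝ) :
    ∫ x : ℝ in Iio a, Complex.exp (c * x) = Complex.exp (c * a) / c := by
  have hint : IntegrableOn (fun x : ℝ => Complex.exp (c * x)) (Iic a) :=
    integrableOn_cexp_Iic hc a
  have hcne : c ≠ 0 := fun h => by simp [h] at hc
  have h1 : Filter.Tendsto (fun b : ℝ => ∫ x in b..a, Complex.exp (c * x)) Filter.atBot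
      (nhds (∫ x : ℝ in Iic a, Complex.exp (c * x))) :=
    intervalIntegral_tendsto_integral_Iic _ hint Filter.tendsto_id
  have h2 : Filter.Tendsto (fun b : ℝ => ∫ x in b..a, Complex.exp (c * x)) Filter.atBot
      (nhds (Complex.exp (c * a) / c)) := by
    have key : ∀ b : ℝ, (∫ x in b..a, Complex.exp (c * x))
        = (Complex.exp (c * a) - Complex.exp (c * b)) / c := fun b =>
      integral_exp_mul_complex hcne
    simp_rw [key]
    have : Filter.Tendsto (fun b : ℝ => Complex.exp (c * b)) Filter.atBot (nhds 0) := by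
      rw [tendsto_zero_iff_norm_tendsto_zero]
      have : ∀ b : ℝ, ‖Complex.exp (c * b)‖ = Real.exp (c.re * b) := fun b => by
        rw [Complex.norm_exp]; simp [Complex.mul_re]
      simp_rw [this]
      exact Real.tendsto_exp_atBot.comp (Filter.tendsto_id.const_mul_atBot hc)
    simpa using ((tendsto_const_nhds.sub this).div_const c)
  rw [restrict_Iio_eq_restrict_Iic] at *
  exact tendsto_nhds_unique h1 h2

/-- The inner integral in the derivation of the spread payoff transform:
for `x₁ > 0` and `Im u₂ > 0`,
`∫_{-∞}^{log(e^{x₁}-1)} e^{-iu₂x₂}((e^{x₁}-1) - e^{x₂}) dx₂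
  = (e^{x₁}-1)^{1-iu₂} (1/(-iu₂) - 1/(1-iu₂))`. -/
theorem spread_payoff_inner_integral
    (x₁ : ℝ) (hx₁ : 0 < x₁) (u₂ : ℂ) (hu₂ : 0 < u₂.im) :
    (∫ x₂ : ℝ in Set.Iio (Real.log (Real.exp x₁ - 1)),
        Complex.exp (-Complex.I * u₂ * (x₂ : ℂ)) *
          (((Real.exp x₁ - 1 : ℝ) : ℂ) - ((Real.exp x₂ : ℝ) : ℂ))) =
      ((Real.exp x₁ - 1 : ℝ) : ℂ) ^ (1 - Complex.I * u₂) *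
        (1 / (-Complex.I * u₂) - 1 / (1 - Complex.I * u₂)) := by
  set k : ℝ := Real.exp x₁ - 1 with hkdef
  have hk : 0 < k := by
    have := Real.add_one_le_exp x₁; simp only [hkdef]; linarith
  set a : ℝ := Real.log k with hadef
  set c₁ : ℂ := -Complex.I * u₂ with hc₁def
  set c₂ : ℂ := 1 - Complex.I * u₂ with hc₂def
  have hc₁re : 0 < c₁.re := by simp [hc₁def, Complex.mul_re]; exact hu₂
  have hc₂re : 0 < c₂.re := by simp [hc₂def, Complex.mul_re]; linarith
  have hc₁ne : c₁ ≠ 0 := fun h => by simp [h] at hc₁re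
  have hc₂ne : c₂ ≠ 0 := fun h => by simp [h] at hc₂re
  have h12 : c₂ = 1 + c₁ := by rw [hc₁def, hc₂def]; ring
  have heq : ∀ x : ℝ, Complex.exp (-Complex.I * u₂ * (x : ℂ)) * ((k : ℂ) - ((Real.exp x : ℝ) : ℂ))
      = (k : ℂ) * Complex.exp (c₁ * x) - Complex.exp (c₂ * x) := by
    intro x
    rw [mul_sub]
    congr 1
    · rw [hc₁def]; ring
    · rw [Complex.ofReal_exp, ← Complex.exp_add, h12, hc₁def]; ring_nf
  rw [MeasureTheory.integral_congr_ae (Filter.Eventually.of_forall fun x => heq x)]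
  have hi1 : IntegrableOn (fun x : ℝ => (k : ℂ) * Complex.exp (c₁ * x)) (Iio a) :=
    ((integrableOn_cexp_Iic hc₁re a).mono_set Iio_subset_Iic_self).const_mul _
  have hi2 : IntegrableOn (fun x : ℝ => Complex.exp (c₂ * x)) (Iio a) :=
    (integrableOn_cexp_Iic hc₂re a).mono_set Iio_subset_Iic_self
  rw [MeasureTheory.integral_sub hi1 hi2, MeasureTheory.integral_const_mul,
    integral_cexp_Iio hc₁re a, integral_cexp_Iio hc₂re a]
  have hlog : (a : ℂ) = Complex.log (k : ℂ) := by
    rw [hadef, Complex.ofReal_log hk.le]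
  have hcpow : ∀ c : ℂ, Complex.exp (c * a) = (k : ℂ) ^ c := by
    intro c
    rw [Complex.cpow_def_of_ne_zero (by exact_mod_cast hk.ne'), hlog, mul_comm]
  have hk2 : (k : ℂ) * Complex.exp (c₁ * a) = (k : ℂ) ^ c₂ := by
    rw [← hcpow c₂, h12, add_mul, one_mul, Complex.exp_add, hlog, Complex.exp_log (by exact_mod_cast hk.ne')]
  rw [mul_div_assoc' ((k:ℂ)) _ c₁, hk2, hcpow c₂, mul_sub, mul_one_div, mul_one_div]
end

section
/- Let u₁, u₂ ∈ ℂ with Im(u₂) > 0 and Im(u₁) + Im(u₂) < -1. Then ∫_0^∞ e^{-iu₁x₁} · (e^{x₁}-1)^{1-iu₂} dx₁ = Γ(i(u₁+u₂)-1)·Γ(2-iu₂)/Γ(iu₁+1), where (e^{x₁}-1)^{1-iu₂} denotes the complex power of the positive real number e^{x₁}-1 and Γ is the complex gamma function. -/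
open MeasureTheory

theorem aux_integral_eq_beta (u₁ u₂ : ℂ) (hu₂ : 0 < u₂.im) (hsum : u₁.im + u₂.im < -1) :
    (∫ x₁ : ℝ in Set.Ioi (0 : ℝ),
        Complex.exp (-Complex.I * u₁ * (x₁ : ℂ)) *
          ((Real.exp x₁ - 1 : ℝ) : ℂ) ^ (1 - Complex.I * u₂)) =
      Complex.betaIntegral (Complex.I * (u₁ + u₂) - 1) (2 - Complex.I * u₂) := by
  have himg : (fun t : ℝ => -Real.log t) '' Set.Ioo 0 1 = Set.Ioi 0 := by
    ext y
    simp only [Set.mem_image, Set.mem_Ioo, Set.mem_Ioi]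
    constructor
    · rintro ⟨t, ⟨ht0, ht1⟩, rfl⟩
      have := Real.log_neg ht0 ht1
      linarith
    · intro hy
      refine ⟨Real.exp (-y), ⟨Real.exp_pos _, ?_⟩, by rw [Real.log_exp]; ring⟩
      rw [Real.exp_lt_one_iff]; linarith
  have hderiv : ∀ t ∈ Set.Ioo (0 : ℝ) 1,
      HasDerivWithinAt (fun t : ℝ => -Real.log t) (-t⁻¹) (Set.Ioo 0 1) t := fun t ht =>
    ((Real.hasDerivAt_log (ne_of_gt ht.1)).neg).hasDerivWithinAt
  have hinj : Set.InjOn (fun t : ℝ => -Real.log t) (Set.Ioo 0 1) := by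
    intro a ha b hb h
    exact Real.log_injOn_pos (Set.mem_Ioi.mpr ha.1) (Set.mem_Ioi.mpr hb.1) (neg_inj.mp h)
  rw [← himg, MeasureTheory.integral_image_eq_integral_abs_deriv_smul measurableSet_Ioo
    hderiv hinj]
  rw [Complex.betaIntegral, intervalIntegral.integral_of_le zero_le_one,
    ← MeasureTheory.integral_Ioc_eq_integral_Ioo]
  refine setIntegral_congr_fun measurableSet_Ioc fun t ht => ?_
  obtain ⟨ht0, ht1⟩ := ht
  have ht0' : (t : ℂ) ≠ 0 := Complex.ofReal_ne_zero.mpr (ne_of_gt ht0)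
  have harg : (t : ℂ).arg ≠ Real.pi := by
    rw [Complex.arg_ofReal_of_nonneg ht0.le]
    exact fun h => Real.pi_ne_zero h.symm
  have h1t : (0:ℝ) ≤ 1 - t := by linarith
  have hexp : Real.exp (-Real.log t) = t⁻¹ := by
    rw [Real.exp_neg, Real.exp_log ht0]
  have hbase : Real.exp (-Real.log t) - 1 = (1 - t) * t⁻¹ := by
    rw [hexp]; field_simp
  have hcexp : Complex.exp (-Complex.I * u₁ * ((-Real.log t : ℝ) : ℂ)) =
      (t : ℂ) ^ (Complex.I * u₁) := by
    rw [Complex.cpow_def_of_ne_zero ht0', ← Complex.ofReal_log ht0.le]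
    push_cast
    ring_nf
  have hpow : (((1 - t) * t⁻¹ : ℝ) : ℂ) ^ (1 - Complex.I * u₂) =
      ((1 - t : ℝ) : ℂ) ^ (1 - Complex.I * u₂) * (t : ℂ) ^ (-(1 - Complex.I * u₂)) := by
    rw [Complex.ofReal_mul, Complex.mul_cpow_ofReal_nonneg h1t (inv_nonneg.mpr ht0.le),
      Complex.ofReal_inv, Complex.inv_cpow _ _ harg, ← Complex.cpow_neg]
  simp only [smul_eq_mul, hbase, hcexp, hpow, abs_neg, abs_inv, abs_of_pos ht0]
  rw [Complex.real_smul, Complex.ofReal_inv]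
  have hinv : ((t : ℂ))⁻¹ = (t : ℂ) ^ (-1 : ℂ) := by
    rw [Complex.cpow_neg, Complex.cpow_one]
  rw [hinv,
    show Complex.I * (u₁ + u₂) - 1 - 1 =
      -1 + (Complex.I * u₁ + -(1 - Complex.I * u₂)) by ring,
    Complex.cpow_add _ _ ht0', Complex.cpow_add _ _ ht0',
    show (2 : ℂ) - Complex.I * u₂ - 1 = 1 - Complex.I * u₂ by ring]
  push_cast
  ring

/-- The outer integral in the derivation of the spread payoff transform:
for `Im u₂ > 0` and `Im u₁ + Im u₂ < -1`,
`∫_0^∞ e^{-iu₁x₁}(e^{x₁}-1)^{1-iu₂} dx₁ = Γ(i(u₁+u₂)-1)Γ(2-iu₂)/Γ(iu₁+1)`. -/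
theorem spread_payoff_outer_integral
    (u₁ u₂ : ℂ) (hu₂ : 0 < u₂.im) (hsum : u₁.im + u₂.im < -1) :
    (∫ x₁ : ℝ in Set.Ioi (0 : ℝ),
        Complex.exp (-Complex.I * u₁ * (x₁ : ℂ)) *
          ((Real.exp x₁ - 1 : ℝ) : ℂ) ^ (1 - Complex.I * u₂)) =
      Complex.Gamma (Complex.I * (u₁ + u₂) - 1) * Complex.Gamma (2 - Complex.I * u₂) /
        Complex.Gamma (Complex.I * u₁ + 1) := by
  have hs : 0 < (Complex.I * (u₁ + u₂) - 1).re := by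
    simp [Complex.add_im, Complex.mul_re]; linarith
  have ht : 0 < (2 - Complex.I * u₂).re := by
    simp [Complex.mul_re]; linarith
  have hst : Complex.I * (u₁ + u₂) - 1 + (2 - Complex.I * u₂) = Complex.I * u₁ + 1 := by ring
  have hΓ : Complex.Gamma (Complex.I * u₁ + 1) ≠ 0 := by
    apply Complex.Gamma_ne_zero_of_re_pos
    rw [← hst]; simpa using by linarith [hs, ht]
  rw [aux_integral_eq_beta u₁ u₂ hu₂ hsum]
  rw [Complex.Gamma_mul_Gamma_eq_betaIntegral hs ht, hst,
    mul_div_cancel_left₀ _ hΓ]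
end

section
/- Fix ε > 0 and set ε₂ = ε, ε₁ = -1-2ε. Then for all v = (v₁,v₂) ∈ ℝ², |P̂(v₁ + iε₁, v₂ + iε₂)| ≤ (Γ(ε)·Γ(2+ε)/Γ(2+2ε)) · Q(‖v‖²/5)^{-1/2}, where ‖v‖² = v₁² + v₂² and Q(z) = (z+ε²)(z+(1+ε)²). -/
open MeasureTheory

private lemma ae_mem_Ioo : ∀ᵐ t ∂(volume.restrict (Set.uIoc (0:ℝ) 1)), t ∈ Set.Ioo (0:ℝ) 1 := by
  rw [Set.uIoc_of_le zero_le_one]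
  have h1 : ∀ᵐ t ∂(volume.restrict (Set.Ioc (0:ℝ) 1)), t ≠ 1 := by
    refine ae_restrict_of_ae ?_
    rw [MeasureTheory.ae_iff]
    simpa using Real.volume_singleton (x := 1)
  filter_upwards [h1, ae_restrict_mem measurableSet_Ioc] with t ht1 ht2
  exact ⟨ht2.1, lt_of_le_of_ne ht2.2 ht1⟩

private lemma betaReal_eq (p q : ℝ) (hp : 0 < p) (hq : 0 < q) :
    Complex.betaIntegral (p : ℂ) (q : ℂ) =
      ((Real.Gamma p * Real.Gamma q / Real.Gamma (p + q) : ℝ) : ℂ) := by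
  have h := Complex.Gamma_mul_Gamma_eq_betaIntegral (s := (p:ℂ)) (t := (q:ℂ))
    (by simpa using hp) (by simpa using hq)
  have hne : Real.Gamma (p + q) ≠ 0 := (Real.Gamma_pos_of_pos (by linarith)).ne'
  rw [← Complex.ofReal_add, Complex.Gamma_ofReal, Complex.Gamma_ofReal,
    Complex.Gamma_ofReal] at h
  push_cast
  rw [eq_div_iff (by exact_mod_cast hne)]
  linear_combination -h

private lemma abs_betaIntegral_le {u w : ℂ} (hu : 0 < u.re) (hw : 0 < w.re) :
    ‖Complex.betaIntegral u w‖ ≤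
      Real.Gamma u.re * Real.Gamma w.re / Real.Gamma (u.re + w.re) := by
  set g : ℝ → ℝ := fun t => t ^ (u.re - 1) * (1 - t) ^ (w.re - 1) with hg
  have heq : ∀ t ∈ Set.uIcc (0:ℝ) 1,
      ((g t : ℝ) : ℂ) = (t:ℂ) ^ ((u.re:ℂ) - 1) * ((1:ℂ) - t) ^ ((w.re:ℂ) - 1) := by
    intro t ht
    rw [Set.uIcc_of_le zero_le_one] at ht
    have h1 : (0:ℝ) ≤ t := ht.1
    have h2 : (0:ℝ) ≤ 1 - t := by linarith [ht.2]
    rw [hg]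
    simp only
    rw [Complex.ofReal_mul, Complex.ofReal_cpow h1, Complex.ofReal_cpow h2]
    push_cast
    rfl
  have hconv := Complex.betaIntegral_convergent (u := (u.re:ℂ)) (v := (w.re:ℂ))
    (by simpa using hu) (by simpa using hw)
  have hint : IntervalIntegrable (fun t => ((g t : ℝ) : ℂ)) volume 0 1 := by
    refine hconv.congr_ae ?_
    filter_upwards [ae_mem_Ioo] with t ht
    exact (heq t (by rw [Set.uIcc_of_le zero_le_one]; exact Set.mem_Icc_of_Ioo ht)).symm
  have hgint : IntervalIntegrable g volume 0 1 := by
    have h := hint.norm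
    refine h.congr_ae ?_
    filter_upwards [ae_mem_Ioo] with t ht
    simp only [Complex.norm_real, Real.norm_eq_abs]
    rw [abs_of_nonneg]
    exact mul_nonneg (Real.rpow_nonneg (le_of_lt ht.1) _)
      (Real.rpow_nonneg (by linarith [ht.2]) _)
  have hval : Complex.betaIntegral (u.re : ℂ) (w.re : ℂ) = ((∫ t in (0:ℝ)..1, g t : ℝ) : ℂ) := by
    rw [Complex.betaIntegral, ← intervalIntegral.integral_ofReal]
    exact intervalIntegral.integral_congr fun t ht => (heq t ht).symm
  have hgval : (∫ t in (0:ℝ)..1, g t) =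
      Real.Gamma u.re * Real.Gamma w.re / Real.Gamma (u.re + w.re) := by
    have h := (betaReal_eq u.re w.re hu hw).symm.trans hval
    exact_mod_cast Complex.ofReal_inj.mp h.symm
  have hbound : ‖Complex.betaIntegral u w‖ ≤ |∫ t in (0:ℝ)..1, g t| := by
    rw [Complex.betaIntegral]
    refine intervalIntegral.norm_integral_le_abs_of_norm_le ?_ hgint
    filter_upwards [ae_mem_Ioo] with t ht
    have h1 : (0:ℝ) < t := ht.1
    have h2 : (0:ℝ) < 1 - t := by linarith [ht.2]
    rw [norm_mul,
      Complex.norm_cpow_eq_rpow_re_of_pos h1, ← Complex.ofReal_one, ← Complex.ofReal_sub,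
      Complex.norm_cpow_eq_rpow_re_of_pos h2]
    simp [hg]
  rw [hgval] at hbound
  rw [abs_of_nonneg (by positivity)] at hbound
  exact hbound

private lemma key_bound (ε s : ℝ) (hε : 0 < ε) (w : ℂ) (hw : w.re = ε) :
    ‖Complex.Gamma ((ε:ℂ) + (s:ℂ) * Complex.I) * Complex.Gamma w /
        Complex.Gamma ((ε:ℂ) + (s:ℂ) * Complex.I + w + 2)‖ ≤
      Real.Gamma ε * Real.Gamma (2 + ε) / Real.Gamma (2 + 2 * ε) *
        (Real.sqrt ((s ^ 2 + ε ^ 2) * (s ^ 2 + (1 + ε) ^ 2)))⁻¹ := by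
  set a : ℂ := (ε:ℂ) + (s:ℂ) * Complex.I with ha
  have hare : a.re = ε := by simp [ha]
  have haim : a.im = s := by simp [ha]
  have ha0 : a ≠ 0 := fun h => by rw [h] at hare; simp at hare; linarith
  have ha1 : a + 1 ≠ 0 := fun h => by
    have h2 : (a + 1).re = ε + 1 := by simp [hare]
    rw [h] at h2; simp at h2; linarith
  have hfe : Complex.Gamma (a + 2) = (a + 1) * (a * Complex.Gamma a) := by
    have h1 := Complex.Gamma_add_one a ha0
    have h2 := Complex.Gamma_add_one (a + 1) ha1
    rw [show a + 2 = a + 1 + 1 by ring, h2, h1]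
  have hbeta : Complex.Gamma (a + 2) * Complex.Gamma w =
      Complex.Gamma (a + w + 2) * Complex.betaIntegral (a + 2) w := by
    have h := Complex.Gamma_mul_Gamma_eq_betaIntegral (s := a + 2) (t := w)
      (by simp [hare]; linarith) (by rw [hw]; exact hε)
    rwa [show a + 2 + w = a + w + 2 by ring] at h
  have hΓc : Complex.Gamma (a + w + 2) ≠ 0 :=
    Complex.Gamma_ne_zero_of_re_pos (by simp [hare, hw]; linarith)
  have hdiv : Complex.Gamma a * Complex.Gamma w / Complex.Gamma (a + w + 2) =
      Complex.betaIntegral (a + 2) w / (a * (a + 1)) := by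
    rw [div_eq_div_iff hΓc (mul_ne_zero ha0 ha1)]
    linear_combination hbeta - Complex.Gamma w * hfe
  rw [hdiv, norm_div, norm_mul]
  have habs : ‖a‖ * ‖a + 1‖ =
      Real.sqrt ((s ^ 2 + ε ^ 2) * (s ^ 2 + (1 + ε) ^ 2)) := by
    rw [Complex.norm_def, Complex.norm_def, ← Real.sqrt_mul (Complex.normSq_nonneg _)]
    congr 1
    rw [Complex.normSq_apply, Complex.normSq_apply]
    simp only [Complex.add_re, Complex.add_im, Complex.one_re, Complex.one_im, hare, haim]
    ring
  rw [habs, ← div_eq_mul_inv]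
  have hsqrt_pos : (0:ℝ) ≤ Real.sqrt ((s ^ 2 + ε ^ 2) * (s ^ 2 + (1 + ε) ^ 2)) :=
    Real.sqrt_nonneg _
  apply div_le_div_of_nonneg_right ?_ hsqrt_pos
  have hb := abs_betaIntegral_le (u := a + 2) (w := w)
    (by simp [hare]; linarith) (by rw [hw]; exact hε)
  have hre : (a + 2).re = 2 + ε := by simp [hare]; ring
  rw [hre, hw] at hb
  refine hb.trans (le_of_eq ?_)
  rw [show (2:ℝ) + ε + ε = 2 + 2 * ε by ring]
  ring

private lemma mono_bound (ε : ℝ) (hε : 0 < ε) {q s2 : ℝ} (hq : 0 ≤ q) (h : q ≤ s2) :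
    Real.Gamma ε * Real.Gamma (2 + ε) / Real.Gamma (2 + 2 * ε) *
        (Real.sqrt ((s2 + ε ^ 2) * (s2 + (1 + ε) ^ 2)))⁻¹ ≤
      Real.Gamma ε * Real.Gamma (2 + ε) / Real.Gamma (2 + 2 * ε) *
        (Real.sqrt ((q + ε ^ 2) * (q + (1 + ε) ^ 2)))⁻¹ := by
  have h1 := Real.Gamma_pos_of_pos hε
  have h2 := Real.Gamma_pos_of_pos (show (0:ℝ) < 2 + ε by linarith)
  have h3 := Real.Gamma_pos_of_pos (show (0:ℝ) < 2 + 2 * ε by linarith)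
  have hC : 0 ≤ Real.Gamma ε * Real.Gamma (2 + ε) / Real.Gamma (2 + 2 * ε) := by positivity
  refine mul_le_mul_of_nonneg_left ?_ hC
  refine inv_anti₀ ?_ ?_
  · refine Real.sqrt_pos.mpr ?_
    nlinarith
  · refine Real.sqrt_le_sqrt ?_
    nlinarith

/-- **Corollary (decay bound on P̂).** With ε₂ = ε > 0 and ε₁ = -1-2ε,
`|P̂(v + iε)| ≤ (Γ(ε)Γ(2+ε)/Γ(2+2ε)) · Q(‖v‖²/5)^{-1/2}` where
`Q(z) = (z+ε²)(z+(1+ε)²)`. -/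
theorem spread_payoff_transform_decay_bound
    (ε : ℝ) (hε : 0 < ε) (v₁ v₂ : ℝ) :
    ‖
        (Complex.Gamma
            (Complex.I *
                (((v₁ : ℂ) + Complex.I * ((-1 - 2 * ε : ℝ) : ℂ)) +
                  ((v₂ : ℂ) + Complex.I * (ε : ℂ))) - 1) *
          Complex.Gamma (-Complex.I * ((v₂ : ℂ) + Complex.I * (ε : ℂ))) /
          Complex.Gamma (Complex.I * ((v₁ : ℂ) + Complex.I * ((-1 - 2 * ε : ℝ) : ℂ)) + 1))‖ ≤
      Real.Gamma ε * Real.Gamma (2 + ε) / Real.Gamma (2 + 2 * ε) *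
        (Real.sqrt
            (((v₁ ^ 2 + v₂ ^ 2) / 5 + ε ^ 2) *
              ((v₁ ^ 2 + v₂ ^ 2) / 5 + (1 + ε) ^ 2)))⁻¹ := by
  have harg1 : Complex.I * (((v₁ : ℂ) + Complex.I * ((-1 - 2 * ε : ℝ) : ℂ)) +
      ((v₂ : ℂ) + Complex.I * (ε : ℂ))) - 1 = (ε:ℂ) + ((v₁ + v₂ : ℝ):ℂ) * Complex.I := by
    push_cast
    linear_combination ((-1:ℂ) - ε) * Complex.I_sq
  have harg2 : -Complex.I * ((v₂ : ℂ) + Complex.I * (ε : ℂ)) =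
      (ε:ℂ) + ((-v₂ : ℝ):ℂ) * Complex.I := by
    push_cast
    linear_combination (-(ε:ℂ)) * Complex.I_sq
  have harg3 : Complex.I * ((v₁ : ℂ) + Complex.I * ((-1 - 2 * ε : ℝ) : ℂ)) + 1 =
      (ε:ℂ) + ((v₁ + v₂ : ℝ):ℂ) * Complex.I + ((ε:ℂ) + ((-v₂ : ℝ):ℂ) * Complex.I) + 2 := by
    push_cast
    linear_combination ((-1:ℂ) - 2 * ε) * Complex.I_sq
  rw [harg1, harg2, harg3]
  have hq : (0:ℝ) ≤ (v₁ ^ 2 + v₂ ^ 2) / 5 := by positivity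
  have h5 : (v₁ ^ 2 + v₂ ^ 2) / 5 ≤ (v₁ + v₂) ^ 2 ∨ (v₁ ^ 2 + v₂ ^ 2) / 5 ≤ v₂ ^ 2 := by
    by_contra hcon
    push_neg at hcon
    nlinarith [hcon.1, hcon.2, sq_nonneg (2 * v₁ + v₂), sq_nonneg (v₁ + 2 * v₂),
      sq_nonneg (v₁ - 2 * v₂), sq_nonneg (2 * v₁ - v₂)]
  rcases h5 with h5 | h5
  · refine (key_bound ε (v₁ + v₂) hε ((ε:ℂ) + ((-v₂ : ℝ):ℂ) * Complex.I)
      (by simp)).trans ?_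
    exact mono_bound ε hε hq h5
  · rw [mul_comm (Complex.Gamma ((ε:ℂ) + ((v₁ + v₂ : ℝ):ℂ) * Complex.I)),
      show (ε:ℂ) + ((v₁ + v₂ : ℝ):ℂ) * Complex.I + ((ε:ℂ) + ((-v₂ : ℝ):ℂ) * Complex.I) + 2 =
        (ε:ℂ) + ((-v₂ : ℝ):ℂ) * Complex.I + ((ε:ℂ) + ((v₁ + v₂ : ℝ):ℂ) * Complex.I) + 2 by ring]
    refine (key_bound ε (-v₂) hε ((ε:ℂ) + ((v₁ + v₂ : ℝ):ℂ) * Complex.I)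
      (by simp)).trans ?_
    rw [neg_sq]
    exact mono_bound ε hε hq h5
end

section
/- Fix ε > 0 and set ε₂ = ε, ε₁ = -1-2ε. Then for all v = (v₁,v₂) ∈ ℝ², |P̂(v₁ + iε₁, v₂ + iε₂)| ≤ B(ε, 2+ε) · min( Q(v₂²)^{-1/2}, Q((v₁+v₂)²)^{-1/2} ), where Q(z) = (z+ε²)(z+(1+ε)²) and B(a,b) = Γ(a)Γ(b)/Γ(a+b) is the beta function. -/
open MeasureTheory Complex Set intervalIntegral

lemma abs_gamma_ratio_le {a b : ℂ} (ha : 0 < a.re) (hb : 0 < b.re) :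
    ‖Complex.Gamma a * Complex.Gamma b / Complex.Gamma (a + b)‖ ≤
      Real.Gamma a.re * Real.Gamma b.re / Real.Gamma (a.re + b.re) := by
  set x := a.re
  set y := b.re
  have hab : 0 < (a + b).re := by rw [Complex.add_re]; linarith
  have hΓ : Complex.Gamma (a + b) ≠ 0 := Complex.Gamma_ne_zero_of_re_pos hab
  have h1 : Complex.Gamma a * Complex.Gamma b / Complex.Gamma (a + b)
      = Complex.betaIntegral a b := by
    rw [Complex.Gamma_mul_Gamma_eq_betaIntegral ha hb]
    field_simp
  rw [h1]
  set g : ℝ → ℝ := fun t => t ^ (x - 1) * (1 - t) ^ (y - 1) with hg_def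
  set F : ℝ → ℂ := fun t => (t : ℂ) ^ ((x : ℂ) - 1) * (1 - (t : ℂ)) ^ ((y : ℂ) - 1) with hF_def
  have hFg : ∀ t ∈ Set.uIcc (0:ℝ) 1, F t = ((g t : ℝ) : ℂ) := by
    intro t ht
    rw [Set.uIcc_of_le zero_le_one] at ht
    have h1t : (0:ℝ) ≤ 1 - t := by linarith [ht.2]
    simp only [hF_def, hg_def]
    rw [show ((x : ℂ) - 1) = ((x - 1 : ℝ) : ℂ) by push_cast; ring,
        show ((y : ℂ) - 1) = ((y - 1 : ℝ) : ℂ) by push_cast; ring,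
        show (1 - (t : ℂ)) = ((1 - t : ℝ) : ℂ) by push_cast; ring,
        ← Complex.ofReal_cpow ht.1, ← Complex.ofReal_cpow h1t, ← Complex.ofReal_mul]
  have hF : IntervalIntegrable F volume 0 1 :=
    Complex.betaIntegral_convergent (by simpa using ha) (by simpa using hb)
  have hg : IntervalIntegrable g volume 0 1 := by
    constructor
    · refine MeasureTheory.IntegrableOn.congr_fun (MeasureTheory.Integrable.re hF.1)
        (fun t ht => ?_) measurableSet_Ioc
      have h2 := hFg t (by rw [Set.uIcc_of_le zero_le_one]; exact Set.Ioc_subset_Icc_self ht)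
      simp only [h2]
      simp
    · rw [Set.Ioc_eq_empty (by norm_num)]
      exact MeasureTheory.integrableOn_empty
  have hbeta : Complex.betaIntegral (x:ℂ) (y:ℂ) = ((∫ t in (0:ℝ)..1, g t : ℝ) : ℂ) := by
    rw [Complex.betaIntegral, ← intervalIntegral.integral_ofReal]
    exact intervalIntegral.integral_congr hFg
  have hbr : Complex.betaIntegral (x:ℂ) (y:ℂ)
      = ((Real.Gamma x * Real.Gamma y / Real.Gamma (x + y) : ℝ) : ℂ) := by
    have h := Complex.Gamma_mul_Gamma_eq_betaIntegral
      (show 0 < (x:ℂ).re by simpa using ha) (show 0 < (y:ℂ).re by simpa using hb)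
    have hne : Complex.Gamma ((x:ℂ) + (y:ℂ)) ≠ 0 :=
      Complex.Gamma_ne_zero_of_re_pos (by simp; linarith)
    have h' : Complex.betaIntegral (x:ℂ) (y:ℂ)
        = Complex.Gamma (x:ℂ) * Complex.Gamma (y:ℂ) / Complex.Gamma ((x:ℂ) + (y:ℂ)) := by
      rw [h]; field_simp
    rw [h', Complex.Gamma_ofReal, Complex.Gamma_ofReal, ← Complex.ofReal_add,
      Complex.Gamma_ofReal]
    push_cast
    ring
  have hval : ∫ t in (0:ℝ)..1, g t = Real.Gamma x * Real.Gamma y / Real.Gamma (x + y) := by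
    have := hbeta.symm.trans hbr
    exact_mod_cast this
  have hgpos : 0 < Real.Gamma x * Real.Gamma y / Real.Gamma (x + y) := by
    have := Real.Gamma_pos_of_pos ha
    have := Real.Gamma_pos_of_pos hb
    have := Real.Gamma_pos_of_pos (show (0:ℝ) < x + y by linarith)
    positivity
  have hbound : ∀ᵐ (t : ℝ) ∂volume.restrict (Set.uIoc (0:ℝ) 1),
      ‖(t : ℂ) ^ (a - 1) * (1 - (t : ℂ)) ^ (b - 1)‖ ≤ g t := by
    rw [Set.uIoc_of_le zero_le_one]
    have hne1 : ∀ᵐ t : ℝ ∂volume, t ≠ 1 := by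
      rw [MeasureTheory.ae_iff]
      simp [show {a : ℝ | ¬ a ≠ 1} = {1} by ext; simp]
    filter_upwards [MeasureTheory.ae_restrict_mem measurableSet_Ioc,
      MeasureTheory.ae_restrict_of_ae hne1] with t ht htne
    have ht0 : 0 < t := ht.1
    have ht1 : 0 < 1 - t := lt_of_le_of_ne (by linarith [ht.2]) (by intro h; exact htne (by linarith))
    simp only [hg_def]
    rw [norm_mul,
      Complex.norm_cpow_eq_rpow_re_of_pos ht0,
      show (1 - (t : ℂ)) = ((1 - t : ℝ) : ℂ) by push_cast; ring,
      Complex.norm_cpow_eq_rpow_re_of_pos ht1]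
    simp [Complex.sub_re]
    exact le_rfl
  calc ‖Complex.betaIntegral a b‖
      = ‖∫ t in (0:ℝ)..1, (t : ℂ) ^ (a - 1) * (1 - (t : ℂ)) ^ (b - 1)‖ := by
        rw [Complex.betaIntegral]
    _ ≤ |∫ t in (0:ℝ)..1, g t| :=
        intervalIntegral.norm_integral_le_abs_of_norm_le hbound hg
    _ = Real.Gamma x * Real.Gamma y / Real.Gamma (x + y) := by
        rw [hval, abs_of_pos hgpos]

lemma bound_aux {x y : ℝ} (hx : 0 < x) (hy : 0 < y) (s t : ℝ) :
    ‖Complex.Gamma ((x:ℂ) + (s:ℂ) * Complex.I) *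
        Complex.Gamma ((y:ℂ) + (t:ℂ) * Complex.I) /
        Complex.Gamma (((x:ℂ) + (s:ℂ) * Complex.I) + ((y:ℂ) + (t:ℂ) * Complex.I) + 2)‖ ≤
      Real.Gamma (x + 2) * Real.Gamma y / Real.Gamma (x + 2 + y) *
        (Real.sqrt ((s ^ 2 + x ^ 2) * (s ^ 2 + (1 + x) ^ 2)))⁻¹ := by
  set A : ℂ := (x:ℂ) + (s:ℂ) * Complex.I with hA
  set B : ℂ := (y:ℂ) + (t:ℂ) * Complex.I with hB
  have hAre : A.re = x := by simp [hA]
  have hBre : B.re = y := by simp [hB]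
  have hA0 : A ≠ 0 := fun h => by rw [h] at hAre; simp at hAre; linarith
  have hA1 : A + 1 ≠ 0 := fun h => by
    have : (A + 1).re = x + 1 := by simp [Complex.add_re, hAre]
    rw [h] at this; simp at this; linarith
  have hGA : Complex.Gamma (A + 2) = (A + 1) * A * Complex.Gamma A := by
    rw [show A + 2 = (A + 1) + 1 by ring, Complex.Gamma_add_one _ hA1,
      Complex.Gamma_add_one _ hA0]
    ring
  have key : Complex.Gamma A * Complex.Gamma B / Complex.Gamma (A + B + 2)
      = (Complex.Gamma (A + 2) * Complex.Gamma B / Complex.Gamma ((A + 2) + B)) /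
        (A * (A + 1)) := by
    have hD : Complex.Gamma (A + B + 2) ≠ 0 :=
      Complex.Gamma_ne_zero_of_re_pos (by simp [Complex.add_re, hAre, hBre]; linarith)
    rw [hGA, show (A + 2) + B = A + B + 2 by ring]
    field_simp
  rw [key, norm_div, norm_mul]
  have hb1 := abs_gamma_ratio_le (a := A + 2) (b := B)
    (by simp [Complex.add_re, hAre]; linarith) (by rw [hBre]; exact hy)
  rw [show (A + 2).re = x + 2 by simp [Complex.add_re, hAre], hBre] at hb1
  have hAabs : ‖A‖ * ‖A + 1‖
      = Real.sqrt ((s ^ 2 + x ^ 2) * (s ^ 2 + (1 + x) ^ 2)) := by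
    rw [hA, show (x:ℂ) + (s:ℂ) * Complex.I + 1 = ((x + 1 : ℝ):ℂ) + (s:ℂ) * Complex.I by
        push_cast; ring,
      Complex.norm_add_mul_I, Complex.norm_add_mul_I, ← Real.sqrt_mul (by positivity)]
    congr 1
    ring
  have hd : 0 < Real.sqrt ((s ^ 2 + x ^ 2) * (s ^ 2 + (1 + x) ^ 2)) := by
    apply Real.sqrt_pos.2; positivity
  rw [hAabs, div_eq_mul_inv]
  exact mul_le_mul_of_nonneg_right hb1 (by positivity)

/-- With ε₂ = ε > 0 and ε₁ = -1-2ε,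
`|P̂(v + iε)| ≤ B(ε, 2+ε) · min(Q(v₂²)^{-1/2}, Q((v₁+v₂)²)^{-1/2})`
where `Q(z) = (z+ε²)(z+(1+ε)²)` and `B(a,b) = Γ(a)Γ(b)/Γ(a+b)`. -/
theorem spread_payoff_transform_min_bound
    (ε : ℝ) (hε : 0 < ε) (v₁ v₂ : ℝ) :
    ‖(Complex.Gamma
            (Complex.I *
                (((v₁ : ℂ) + Complex.I * ((-1 - 2 * ε : ℝ) : ℂ)) +
                  ((v₂ : ℂ) + Complex.I * (ε : ℂ))) - 1) *
          Complex.Gamma (-Complex.I * ((v₂ : ℂ) + Complex.I * (ε : ℂ))) /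
          Complex.Gamma (Complex.I * ((v₁ : ℂ) + Complex.I * ((-1 - 2 * ε : ℝ) : ℂ)) + 1))‖ ≤
      Real.Gamma ε * Real.Gamma (2 + ε) / Real.Gamma (2 + 2 * ε) *
        min (Real.sqrt ((v₂ ^ 2 + ε ^ 2) * (v₂ ^ 2 + (1 + ε) ^ 2)))⁻¹
          (Real.sqrt (((v₁ + v₂) ^ 2 + ε ^ 2) * ((v₁ + v₂) ^ 2 + (1 + ε) ^ 2)))⁻¹ := by
  set a : ℂ := (ε:ℂ) + ((v₁ + v₂ : ℝ):ℂ) * Complex.I with ha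
  set b : ℂ := (ε:ℂ) + ((-v₂ : ℝ):ℂ) * Complex.I with hb
  have e1 : Complex.I *
      (((v₁ : ℂ) + Complex.I * ((-1 - 2 * ε : ℝ) : ℂ)) +
        ((v₂ : ℂ) + Complex.I * (ε : ℂ))) - 1 = a := by
    rw [ha]; push_cast
    linear_combination ((-1 : ℂ) - ε) * Complex.I_sq
  have e2 : -Complex.I * ((v₂ : ℂ) + Complex.I * (ε : ℂ)) = b := by
    rw [hb]; push_cast
    linear_combination (-(ε : ℂ)) * Complex.I_sq
  have e3 : Complex.I * ((v₁ : ℂ) + Complex.I * ((-1 - 2 * ε : ℝ) : ℂ)) + 1 = a + b + 2 := by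
    rw [ha, hb]; push_cast
    linear_combination ((-1 : ℂ) - 2 * ε) * Complex.I_sq
  rw [e1, e2, e3]
  have hC : Real.Gamma (ε + 2) * Real.Gamma ε / Real.Gamma (ε + 2 + ε)
      = Real.Gamma ε * Real.Gamma (2 + ε) / Real.Gamma (2 + 2 * ε) := by
    rw [show ε + 2 = 2 + ε by ring, show 2 + ε + ε = 2 + 2 * ε by ring]
    ring
  have h2 : ‖Complex.Gamma a * Complex.Gamma b / Complex.Gamma (a + b + 2)‖ ≤
      Real.Gamma ε * Real.Gamma (2 + ε) / Real.Gamma (2 + 2 * ε) *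
        (Real.sqrt (((v₁ + v₂) ^ 2 + ε ^ 2) * ((v₁ + v₂) ^ 2 + (1 + ε) ^ 2)))⁻¹ := by
    have := bound_aux hε hε (v₁ + v₂) (-v₂)
    rw [hC] at this
    exact this
  have h1 : ‖Complex.Gamma a * Complex.Gamma b / Complex.Gamma (a + b + 2)‖ ≤
      Real.Gamma ε * Real.Gamma (2 + ε) / Real.Gamma (2 + 2 * ε) *
        (Real.sqrt ((v₂ ^ 2 + ε ^ 2) * (v₂ ^ 2 + (1 + ε) ^ 2)))⁻¹ := by
    have := bound_aux hε hε (-v₂) (v₁ + v₂)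
    rw [hC, mul_comm (Complex.Gamma b), show b + a + 2 = a + b + 2 by ring,
      show (-v₂ : ℝ) ^ 2 = v₂ ^ 2 by ring] at this
    exact this
  rcases le_total (Real.sqrt ((v₂ ^ 2 + ε ^ 2) * (v₂ ^ 2 + (1 + ε) ^ 2)))⁻¹
      (Real.sqrt (((v₁ + v₂) ^ 2 + ε ^ 2) * ((v₁ + v₂) ^ 2 + (1 + ε) ^ 2)))⁻¹ with h | h
  · rwa [min_eq_left h]
  · rwa [min_eq_right h]
end

section
/- Let M ≥ 1 be an integer, p > 0 a real number, and s₁, …, s_M complex numbers with Re(s_m) > 0 for every m. Then the Dirichlet-type integral over the open simplex satisfies ∫_{{q ∈ (0,∞)^{M-1} : q₁+⋯+q_{M-1} < p}} ( ∏_{m=1}^{M-1} q_m^{s_m - 1} ) · (p - q₁ - ⋯ - q_{M-1})^{s_M - 1} d^{M-1}q = ( ∏_{m=1}^{M} Γ(s_m) / Γ(s₁+⋯+s_M) ) · p^{s₁+⋯+s_M - 1}. (For M = 1 the left-hand side is interpreted as p^{s₁-1}.) Equivalently, with s_m = -iu_m for u_m ∈ ℂ with Im(u_m) > 0, this is the identity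 ∫_{ℝ^M} e^z δ(e^z - Σ_m e^{x_m}) e^{-iu·x} d^Mx = (∏_m Γ(-iu_m)/Γ(-iΣ_m u_m)) e^{-i(Σ_m u_m)z} after resolving the delta function. -/
open MeasureTheory Set

noncomputable section DirichletAux

/-- The Dirichlet simplex integrand. -/
def Fint (N : ℕ) (p : ℝ) (s : Fin (N + 1) → ℂ) (q : Fin N → ℝ) : ℂ :=
  (∏ m : Fin N, ((q m : ℝ) : ℂ) ^ (s m.castSucc - 1)) *
    (((p - ∑ m, q m : ℝ) : ℂ) ^ (s (Fin.last N) - 1))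

/-- The open simplex. -/
def Sset (N : ℕ) (p : ℝ) : Set (Fin N → ℝ) :=
  {q : Fin N → ℝ | (∀ m, 0 < q m) ∧ ∑ m, q m < p}

lemma isOpen_Sset (N : ℕ) (p : ℝ) : IsOpen (Sset N p) := by
  have h1 : IsOpen {q : Fin N → ℝ | ∀ m, 0 < q m} := by
    have : {q : Fin N → ℝ | ∀ m, 0 < q m} = ⋂ m, {q | 0 < q m} := by
      ext q; simp
    rw [this]
    exact isOpen_iInter_of_finite fun m => isOpen_lt continuous_const (continuous_apply m)
  have h2 : IsOpen {q : Fin N → ℝ | ∑ m, q m < p} :=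
    isOpen_lt (continuous_finset_sum _ fun m _ => continuous_apply m) continuous_const
  exact h1.inter h2

lemma measurableSet_Sset (N : ℕ) (p : ℝ) : MeasurableSet (Sset N p) :=
  (isOpen_Sset N p).measurableSet

lemma Sset_empty {N : ℕ} {p : ℝ} (hp : p ≤ 0) : Sset N p = ∅ := by
  ext q
  simp only [Sset, Set.mem_setOf_eq, Set.mem_empty_iff_false, iff_false, not_and]
  intro h1 h2
  have : (0:ℝ) ≤ ∑ m, q m := Finset.sum_nonneg fun m _ => (h1 m).le
  linarith

end DirichletAux

section Cont
lemma continuousOn_ofReal_cpow_comp {α : Type*} [TopologicalSpace α] {g : α → ℝ}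
    (hg : Continuous g) {S : Set α} (hS : ∀ z ∈ S, g z ≠ 0) (w : ℂ) :
    ContinuousOn (fun z => ((g z : ℝ) : ℂ) ^ w) S := by
  intro z hz
  have h := Complex.continuousAt_ofReal_cpow (g z) w (Or.inr (hS z hz))
  have h2 : ContinuousAt (fun z => ((g z : ℝ), w)) z :=
    hg.continuousAt.prodMk continuousAt_const
  have h3 : ContinuousAt ((fun pr : ℝ × ℂ => (pr.1 : ℂ) ^ pr.2) ∘ fun z => (g z, w)) z :=
    ContinuousAt.comp (x := z) h h2
  exact h3.continuousWithinAt

lemma continuousOn_Fint (N : ℕ) (p : ℝ) (s : Fin (N + 1) → ℂ) :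
    ContinuousOn (Fint N p s) (Sset N p) := by
  apply ContinuousOn.mul
  · apply continuousOn_finset_prod
    intro m _
    exact continuousOn_ofReal_cpow_comp (continuous_apply m)
      (fun q hq => (hq.1 m).ne') _
  · exact continuousOn_ofReal_cpow_comp
      (continuous_const.sub (continuous_finset_sum _ fun m _ => continuous_apply m))
      (fun q hq => by have := hq.2; dsimp; linarith) _

lemma betaInt_complex {u v : ℂ} (hu : 0 < u.re) (hv : 0 < v.re) {p : ℝ} (hp : 0 < p) :
    IntegrableOn (fun x : ℝ => (x : ℂ) ^ (u - 1) * (((p - x : ℝ)) : ℂ) ^ (v - 1)) (Ioo 0 p) := by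
  have hpne : p ≠ 0 := hp.ne'
  have h1 := Complex.betaIntegral_convergent hu hv
  have h2 := h1.comp_mul_right (c := p⁻¹)
  rw [zero_div, one_div, inv_inv] at h2
  rw [intervalIntegrable_iff_integrableOn_Ioo_of_le hp.le] at h2
  have h3 := h2.const_mul ((p : ℂ) ^ (u - 1) * (p : ℂ) ^ (v - 1))
  refine h3.congr ?_
  filter_upwards [ae_restrict_mem measurableSet_Ioo] with x hx
  obtain ⟨hx0, hxp⟩ := hx
  have e1 : ((x * p⁻¹ : ℝ) : ℂ) ^ (u - 1) * (p : ℂ) ^ (u - 1) = (x : ℂ) ^ (u - 1) := by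
    rw [← Complex.mul_cpow_ofReal_nonneg (by positivity) hp.le, ← Complex.ofReal_mul,
      show x * p⁻¹ * p = x by field_simp]
  have e2 : (((p - x) * p⁻¹ : ℝ) : ℂ) ^ (v - 1) * (p : ℂ) ^ (v - 1) = ((p - x : ℝ) : ℂ) ^ (v - 1) := by
    rw [← Complex.mul_cpow_ofReal_nonneg
        (mul_nonneg (by linarith) (by positivity)) hp.le, ← Complex.ofReal_mul,
      show (p - x) * p⁻¹ * p = p - x by field_simp]
  have e3 : (1 : ℂ) - ((x * p⁻¹ : ℝ) : ℂ) = (((p - x) * p⁻¹ : ℝ) : ℂ) := by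
    have : (p : ℂ) ≠ 0 := Complex.ofReal_ne_zero.mpr hpne
    push_cast
    field_simp
  calc ((p : ℂ) ^ (u - 1) * (p : ℂ) ^ (v - 1)) *
        (((x * p⁻¹ : ℝ) : ℂ) ^ (u - 1) * (1 - ((x * p⁻¹ : ℝ) : ℂ)) ^ (v - 1))
      = (((x * p⁻¹ : ℝ) : ℂ) ^ (u - 1) * (p : ℂ) ^ (u - 1)) *
        ((((p - x) * p⁻¹ : ℝ) : ℂ) ^ (v - 1) * (p : ℂ) ^ (v - 1)) := by rw [e3]; ring
    _ = (x : ℂ) ^ (u - 1) * ((p - x : ℝ) : ℂ) ^ (v - 1) := by rw [e1, e2]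

lemma betaVal_complex {u v : ℂ} {p : ℝ} (hp : 0 < p) :
    ∫ x in Ioo 0 p, (x : ℂ) ^ (u - 1) * ((p - x : ℝ) : ℂ) ^ (v - 1) =
      (p : ℂ) ^ (u + v - 1) * Complex.betaIntegral u v := by
  rw [← integral_Ioc_eq_integral_Ioo, ← intervalIntegral.integral_of_le hp.le,
    ← Complex.betaIntegral_scaled u v hp]
  simp only [Complex.ofReal_sub]

lemma betaInt_real {a b : ℝ} (ha : 0 < a) (hb : 0 < b) {p : ℝ} (hp : 0 < p) :
    IntegrableOn (fun x : ℝ => x ^ (a - 1) * (p - x) ^ (b - 1)) (Ioo 0 p) := by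
  have h := (betaInt_complex (u := (a : ℂ)) (v := (b : ℂ)) (by simpa) (by simpa) hp).norm
  refine h.congr ?_
  filter_upwards [ae_restrict_mem measurableSet_Ioo] with x hx
  obtain ⟨hx0, hxp⟩ := hx
  rw [norm_mul,
    show ((a : ℂ) - 1) = ((a - 1 : ℝ) : ℂ) by push_cast; ring,
    show ((b : ℂ) - 1) = ((b - 1 : ℝ) : ℂ) by push_cast; ring,
    Complex.norm_cpow_eq_rpow_re_of_pos hx0, Complex.norm_cpow_eq_rpow_re_of_pos (by linarith)]
  simp

lemma cpow_re_ofReal_norm {r : ℝ} (hr : 0 < r) (w : ℂ) :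
    ((r : ℝ) : ℂ) ^ ((w.re : ℂ) - 1) = ((‖((r : ℝ) : ℂ) ^ (w - 1)‖ : ℝ) : ℂ) := by
  rw [Complex.norm_cpow_eq_rpow_re_of_pos hr, Complex.ofReal_cpow hr.le]
  congr 1
  push_cast [Complex.sub_re, Complex.one_re]
  ring

lemma Fint_ofReal_norm {N : ℕ} {p : ℝ} (s : Fin (N + 1) → ℂ) {q : Fin N → ℝ}
    (hq : q ∈ Sset N p) :
    Fint N p (fun i => ((s i).re : ℂ)) q = ((‖Fint N p s q‖ : ℝ) : ℂ) := by
  obtain ⟨h1, h2⟩ := hq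
  have hps : 0 < p - ∑ m, q m := by simp only [sub_pos]; exact h2
  unfold Fint
  rw [norm_mul, norm_prod, Complex.ofReal_mul, Complex.ofReal_prod]
  congr 1
  · exact Finset.prod_congr rfl fun m _ => cpow_re_ofReal_norm (h1 m) _
  · exact cpow_re_ofReal_norm hps _

theorem Fkey (N : ℕ) : ∀ (p : ℝ), 0 < p → ∀ s : Fin (N + 1) → ℂ, (∀ m, 0 < (s m).re) →
    IntegrableOn (Fint N p s) (Sset N p) volume ∧
      ∫ q in Sset N p, Fint N p s q =
        ((∏ m, Complex.Gamma (s m)) / Complex.Gamma (∑ m, s m)) * (p : ℂ) ^ ((∑ m, s m) - 1) := by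
  induction N with
  | zero =>
    intro p hp s hs
    have hS : Sset 0 p = Set.univ := by
      ext q
      simp [Sset, hp]
    have hF : Fint 0 p s = fun _ => (p : ℂ) ^ (s 0 - 1) := by
      funext q
      simp [Fint, show Fin.last 0 = 0 from rfl]
    have hμ : (volume : Measure (Fin 0 → ℝ)) Set.univ = 1 := by
      simp [volume_pi, Measure.pi_univ]
    constructor
    · rw [hS, hF]
      refine (integrableOn_const_iff (C := (p : ℂ) ^ (s 0 - 1))).mpr (Or.inr ?_)
      rw [hμ]
      exact ENNReal.one_lt_top
    · rw [hS, hF, Measure.restrict_univ, integral_const, measureReal_def, hμ]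
      have hG : Complex.Gamma (s 0) ≠ 0 := Complex.Gamma_ne_zero_of_re_pos (hs 0)
      simp [Fin.sum_univ_one, Fin.prod_univ_one, div_self hG]
  | succ N IH =>
    intro p hp s hs
    set s' : Fin (N + 1) → ℂ := fun i => s i.succ with hs'def
    have hs' : ∀ m, 0 < (s' m).re := fun m => hs _
    set T : ℂ := ∑ i, s' i with hTdef
    have hTre : 0 < T.re := by
      rw [hTdef, Complex.re_sum]
      exact Finset.sum_pos (fun i _ => hs' i) Finset.univ_nonempty
    have hsum : ∑ m, s m = s 0 + T := by rw [Fin.sum_univ_succ]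
    have hprodG : ∏ m, Complex.Gamma (s m)
        = Complex.Gamma (s 0) * ∏ i, Complex.Gamma (s' i) := by
      rw [Fin.prod_univ_succ]
    set sr' : Fin (N + 1) → ℂ := fun i => ((s' i).re : ℂ) with hsr'def
    have hsr' : ∀ m, 0 < (sr' m).re := fun m => by simpa [hsr'def] using hs' m
    set tr : ℝ := ∑ i, (s' i).re with htrdef
    have htr : 0 < tr := Finset.sum_pos (fun i _ => hs' i) Finset.univ_nonempty
    have hsumsr : ∑ i, sr' i = ((tr : ℝ) : ℂ) := by rw [htrdef]; push_cast; rfl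
    set Cr : ℝ := (∏ i, Real.Gamma ((s' i).re)) / Real.Gamma tr with hCrdef
    set C : ℂ := (∏ i, Complex.Gamma (s' i)) / Complex.Gamma T with hCdef
    -- the measurable equivalence
    set e := MeasurableEquiv.piFinSuccAbove (fun _ : Fin (N + 1) => ℝ) 0 with hedef
    have hmp : MeasurePreserving e.symm volume volume :=
      (volume_preserving_piFinSuccAbove (fun _ : Fin (N + 1) => ℝ) 0).symm
    have hes : ∀ z : ℝ × (Fin N → ℝ), e.symm z = Fin.cons z.1 z.2 := by
      intro z
      rw [hedef]
      simp [MeasurableEquiv.piFinSuccAbove, Fin.insertNthEquiv, Fin.insertNth_zero']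
    set G : ℝ × (Fin N → ℝ) → ℂ :=
      fun z => (z.1 : ℂ) ^ (s 0 - 1) * Fint N (p - z.1) s' z.2 with hGdef
    have hGcomp : ∀ z : ℝ × (Fin N → ℝ), Fint (N + 1) p s (e.symm z) = G z := by
      intro z
      rw [hes, hGdef]
      show (∏ m : Fin (N+1), (((Fin.cons z.1 z.2 : Fin (N+1) → ℝ) m : ℝ) : ℂ) ^ (s m.castSucc - 1)) *
          (((p - ∑ m, (Fin.cons z.1 z.2 : Fin (N+1) → ℝ) m : ℝ) : ℂ) ^ (s (Fin.last (N+1)) - 1))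
        = (z.1 : ℂ) ^ (s 0 - 1) *
          ((∏ m : Fin N, ((z.2 m : ℝ) : ℂ) ^ (s' m.castSucc - 1)) *
            ((((p - z.1) - ∑ m, z.2 m : ℝ) : ℂ) ^ (s' (Fin.last N) - 1)))
      rw [Fin.prod_univ_succ, Fin.sum_cons]
      simp only [Fin.cons_zero, Fin.cons_succ, Fin.castSucc_zero, Fin.succ_last, hs'def]
      rw [show p - (z.1 + ∑ m, z.2 m) = (p - z.1) - ∑ m, z.2 m by ring]
      rw [mul_assoc]
      simp only [Fin.succ_castSucc]
    set Tset : Set (ℝ × (Fin N → ℝ)) :=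
      {z : ℝ × (Fin N → ℝ) | (0 < z.1 ∧ ∀ m, 0 < z.2 m) ∧ z.1 + ∑ m, z.2 m < p} with hTsetdef
    have hpre : e.symm ⁻¹' Sset (N + 1) p = Tset := by
      ext z
      simp only [Set.mem_preimage, hes, Sset, Set.mem_setOf_eq, hTsetdef,
        Fin.forall_fin_succ, Fin.cons_zero, Fin.cons_succ, Fin.sum_cons]
    have hmem : ∀ (x : ℝ) (y : Fin N → ℝ),
        (x, y) ∈ Tset ↔ 0 < x ∧ y ∈ Sset N (p - x) := by
      intro x y
      constructor
      · rintro ⟨⟨a, b⟩, c⟩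
        refine ⟨a, b, ?_⟩
        simp only [Set.mem_setOf_eq] at c ⊢
        linarith
      · rintro ⟨a, b, c⟩
        refine ⟨⟨a, b⟩, ?_⟩
        simp only [Set.mem_setOf_eq, Sset] at c ⊢
        linarith
    have hTmeas : MeasurableSet Tset := by
      rw [← hpre]; exact e.symm.measurable (measurableSet_Sset _ _)
    have hslice : ∀ (x : ℝ) (y : Fin N → ℝ),
        Tset.indicator G (x, y) =
          if 0 < x then (Sset N (p - x)).indicator
            (fun y => (x : ℂ) ^ (s 0 - 1) * Fint N (p - x) s' y) y else 0 := by
      intro x y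
      by_cases hx : 0 < x
      · rw [if_pos hx]
        by_cases hy : y ∈ Sset N (p - x)
        · rw [Set.indicator_of_mem ((hmem x y).mpr ⟨hx, hy⟩), Set.indicator_of_mem hy]
        · rw [Set.indicator_of_notMem (fun h => hy ((hmem x y).mp h).2),
            Set.indicator_of_notMem hy]
      · rw [if_neg hx, Set.indicator_of_notMem (fun h => hx ((hmem x y).mp h).1)]
    have hcont : ContinuousOn G Tset := by
      apply ContinuousOn.mul
      · exact continuousOn_ofReal_cpow_comp continuous_fst (fun z hz => hz.1.1.ne') _
      · show ContinuousOn (fun z : ℝ × (Fin N → ℝ) =>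
          (∏ m : Fin N, ((z.2 m : ℝ) : ℂ) ^ (s' m.castSucc - 1)) *
            (((p - z.1 - ∑ m, z.2 m : ℝ) : ℂ) ^ (s' (Fin.last N) - 1))) Tset
        apply ContinuousOn.mul
        · exact continuousOn_finset_prod _ fun m _ =>
            continuousOn_ofReal_cpow_comp ((continuous_apply m).comp continuous_snd)
              (fun z hz => (hz.1.2 m).ne') _
        · refine continuousOn_ofReal_cpow_comp
            ((continuous_const.sub continuous_fst).sub
              (continuous_finset_sum _ fun m _ => (continuous_apply m).comp continuous_snd))
            (fun z hz => ?_) _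
          have h2 : z.1 + ∑ m, z.2 m < p := hz.2
          have : (0:ℝ) < p - z.1 - ∑ m, z.2 m := by linarith
          exact this.ne'
    have hasm : AEStronglyMeasurable (Tset.indicator G) volume :=
      (aestronglyMeasurable_indicator_iff hTmeas).mpr (hcont.aestronglyMeasurable hTmeas)
    have hsliceInt : ∀ x : ℝ, Integrable (fun y => Tset.indicator G (x, y)) volume := by
      intro x
      simp only [hslice]
      by_cases hx : 0 < x
      · simp only [if_pos hx]
        rw [integrable_indicator_iff (measurableSet_Sset _ _)]
        by_cases hpx : 0 < p - x
        · exact ((IH (p - x) hpx s' hs').1).const_mul _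
        · rw [Sset_empty (by linarith)]
          simp
      · simp only [if_neg hx]
        exact integrable_zero _ _ _
    have hinner : ∀ x : ℝ, (∫ y, Tset.indicator G (x, y)) =
        (Ioo (0:ℝ) p).indicator
          (fun x => (x : ℂ) ^ (s 0 - 1) * (C * ((p - x : ℝ) : ℂ) ^ (T - 1))) x := by
      intro x
      simp only [hslice]
      by_cases hx : 0 < x
      · simp only [if_pos hx]
        by_cases hpx : 0 < p - x
        · rw [integral_indicator (measurableSet_Sset _ _), integral_const_mul,
            (IH (p - x) hpx s' hs').2,
            Set.indicator_of_mem (show x ∈ Ioo 0 p from ⟨hx, by linarith⟩)]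
        · rw [Sset_empty (by linarith),
            Set.indicator_of_notMem
              (show x ∉ Ioo 0 p by simp only [Set.mem_Ioo, not_and]; intro _; linarith)]
          simp
      · simp only [if_neg hx]
        rw [Set.indicator_of_notMem
          (show x ∉ Ioo 0 p by simp only [Set.mem_Ioo, not_and]; intro h; exact absurd h hx)]
        simp
    have hnorm : ∀ x : ℝ, (∫ y, ‖Tset.indicator G (x, y)‖) =
        (Ioo (0:ℝ) p).indicator
          (fun x => x ^ ((s 0).re - 1) * (Cr * (p - x) ^ (tr - 1))) x := by
      intro x
      simp only [hslice]
      by_cases hx : 0 < x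
      · simp only [if_pos hx]
        by_cases hpx : 0 < p - x
        · simp only [norm_indicator_eq_indicator_norm]
          rw [integral_indicator (measurableSet_Sset _ _)]
          simp only [norm_mul]
          rw [integral_const_mul]
          have hIH := IH (p - x) hpx sr' hsr'
          have heq : Set.EqOn (fun y => ‖Fint N (p - x) s' y‖)
              (fun y => (Fint N (p - x) sr' y).re) (Sset N (p - x)) := by
            intro y hy
            have h := congrArg Complex.re (Fint_ofReal_norm s' hy)
            simp only [Complex.ofReal_re] at h
            exact h.symm
          rw [setIntegral_congr_fun (measurableSet_Sset _ _) heq]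
          have hre : ∫ y in Sset N (p - x), (Fint N (p - x) sr' y).re
              = (∫ y in Sset N (p - x), Fint N (p - x) sr' y).re := integral_re hIH.1
          rw [hre, hIH.2, hsumsr]
          have e1 : (∏ i, Complex.Gamma (sr' i))
              = ((∏ i, Real.Gamma ((s' i).re) : ℝ) : ℂ) := by
            rw [Complex.ofReal_prod]
            exact Finset.prod_congr rfl fun i _ => by simp only [hsr'def]; exact Complex.Gamma_ofReal _
          have e2 : Complex.Gamma ((tr : ℝ) : ℂ) = ((Real.Gamma tr : ℝ) : ℂ) :=
            Complex.Gamma_ofReal _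
          have e3 : ((p - x : ℝ) : ℂ) ^ (((tr : ℝ) : ℂ) - 1)
              = (((p - x) ^ (tr - 1) : ℝ) : ℂ) := by
            rw [show (((tr : ℝ) : ℂ) - 1) = ((tr - 1 : ℝ) : ℂ) by push_cast; ring,
              ← Complex.ofReal_cpow hpx.le]
          rw [e1, e2, e3, show ((((∏ i, Real.Gamma ((s' i).re) : ℝ)) : ℂ) / ((Real.Gamma tr : ℝ) : ℂ))
              * (((p - x) ^ (tr - 1) : ℝ) : ℂ) = ((Cr * (p - x) ^ (tr - 1) : ℝ) : ℂ) by
            rw [hCrdef]; push_cast; ring]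
          rw [Complex.ofReal_re,
            Set.indicator_of_mem (show x ∈ Ioo 0 p from ⟨hx, by linarith⟩)]
          congr 1
          rw [Complex.norm_cpow_eq_rpow_re_of_pos hx]
          simp [Complex.sub_re]
        · rw [Sset_empty (by linarith),
            Set.indicator_of_notMem
              (show x ∉ Ioo 0 p by simp only [Set.mem_Ioo, not_and]; intro _; linarith)]
          simp
      · simp only [if_neg hx]
        rw [Set.indicator_of_notMem
          (show x ∉ Ioo 0 p by simp only [Set.mem_Ioo, not_and]; intro h; exact absurd h hx)]
        simp
    have hnormint : Integrable (fun x => ∫ y, ‖Tset.indicator G (x, y)‖) volume := by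
      rw [show (fun x => ∫ y, ‖Tset.indicator G (x, y)‖)
          = (Ioo (0:ℝ) p).indicator (fun x => x ^ ((s 0).re - 1) * (Cr * (p - x) ^ (tr - 1)))
          from funext hnorm]
      rw [integrable_indicator_iff measurableSet_Ioo]
      have hb := (betaInt_real (hs 0) htr hp).const_mul Cr
      exact hb.congr (Filter.Eventually.of_forall fun x => by ring)
    have hint : Integrable (Tset.indicator G) volume := by
      rw [Measure.volume_eq_prod]
      rw [Measure.volume_eq_prod] at hasm
      exact (integrable_prod_iff hasm).mpr
        ⟨Filter.Eventually.of_forall hsliceInt, hnormint⟩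
    have hIntOn : IntegrableOn (Fint (N + 1) p s) (Sset (N + 1) p) volume := by
      have h4 : Integrable ((Fint (N + 1) p s) ∘ ⇑e.symm)
          (volume.restrict (⇑e.symm ⁻¹' Sset (N + 1) p)) := by
        rw [hpre, show (Fint (N + 1) p s) ∘ ⇑e.symm = G from funext fun z => hGcomp z]
        exact (integrable_indicator_iff hTmeas).mp hint
      exact ((hmp.restrict_preimage (measurableSet_Sset _ _)).integrable_comp_emb
        e.symm.measurableEmbedding).mp h4
    refine ⟨hIntOn, ?_⟩
    rw [← hmp.setIntegral_preimage_emb e.symm.measurableEmbedding (Fint (N + 1) p s)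
        (Sset (N + 1) p)]
    calc ∫ z in ⇑e.symm ⁻¹' Sset (N + 1) p, Fint (N + 1) p s (e.symm z)
        = ∫ z in Tset, G z := by
          rw [hpre]
          exact setIntegral_congr_fun hTmeas fun z _ => hGcomp z
      _ = ∫ z, Tset.indicator G z := (integral_indicator hTmeas).symm
      _ = ∫ x, ∫ y, Tset.indicator G (x, y) := by
          rw [Measure.volume_eq_prod]
          rw [Measure.volume_eq_prod] at hint
          exact integral_prod _ hint
      _ = ∫ x, (Ioo (0:ℝ) p).indicator
            (fun x => (x : ℂ) ^ (s 0 - 1) * (C * ((p - x : ℝ) : ℂ) ^ (T - 1))) x := by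
          exact integral_congr_ae (Filter.Eventually.of_forall hinner)
      _ = ∫ x in Ioo (0:ℝ) p, (x : ℂ) ^ (s 0 - 1) * (C * ((p - x : ℝ) : ℂ) ^ (T - 1)) :=
          integral_indicator measurableSet_Ioo
      _ = C * ∫ x in Ioo (0:ℝ) p, (x : ℂ) ^ (s 0 - 1) * ((p - x : ℝ) : ℂ) ^ (T - 1) := by
          rw [← integral_const_mul]
          exact setIntegral_congr_fun measurableSet_Ioo fun x _ => by ring
      _ = C * ((p : ℂ) ^ (s 0 + T - 1) * Complex.betaIntegral (s 0) T) := by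
          rw [betaVal_complex hp]
      _ = ((∏ m, Complex.Gamma (s m)) / Complex.Gamma (∑ m, s m))
            * (p : ℂ) ^ ((∑ m, s m) - 1) := by
          rw [hsum, hprodG, hCdef]
          have hB := Complex.Gamma_mul_Gamma_eq_betaIntegral (hs 0) hTre
          have hGT : Complex.Gamma T ≠ 0 := Complex.Gamma_ne_zero_of_re_pos hTre
          have hGsT : Complex.Gamma (s 0 + T) ≠ 0 :=
            Complex.Gamma_ne_zero_of_re_pos (by rw [Complex.add_re]; exact add_pos (hs 0) hTre)
          have hBval : Complex.betaIntegral (s 0) T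
              = Complex.Gamma (s 0) * Complex.Gamma T / Complex.Gamma (s 0 + T) := by
            rw [eq_div_iff hGsT, mul_comm]
            exact hB.symm
          rw [hBval]
          field_simp

/-- **Proposition 2 (Dirichlet-type simplex integral).**
For an integer `M = N + 1 ≥ 1`, a real `p > 0` and complex exponents `s₀, …, s_N` with
positive real parts, the integral over the open simplex
`{q ∈ (0,∞)^N : q₀ + ⋯ + q_{N-1} < p}` of
`(∏_m q_m^{s_m - 1}) · (p - Σ_m q_m)^{s_N - 1}`
equals `(∏_m Γ(s_m) / Γ(Σ_m s_m)) · p^{Σ_m s_m - 1}`.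
(For `N = 0`, i.e. `M = 1`, the left-hand side is the constant `p^{s₀ - 1}`.) -/
theorem dirichlet_simplex_integral
    (N : ℕ) (p : ℝ) (hp : 0 < p) (s : Fin (N + 1) → ℂ) (hs : ∀ m, 0 < (s m).re) :
    (∫ q : Fin N → ℝ in {q : Fin N → ℝ | (∀ m, 0 < q m) ∧ ∑ m, q m < p},
        (∏ m : Fin N, ((q m : ℝ) : ℂ) ^ (s m.castSucc - 1)) *
          (((p - ∑ m, q m : ℝ) : ℂ) ^ (s (Fin.last N) - 1))) =
      ((∏ m, Complex.Gamma (s m)) / Complex.Gamma (∑ m, s m)) *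
        ((p : ℝ) : ℂ) ^ ((∑ m, s m) - 1) := by
  exact (Fkey N p hp s hs).2
end Cont
end

section
/- Let M ≥ 1 be an integer, let ε₁, …, ε_M be real numbers with ε_m > 0 for all m, and let ε̃ be real with ε̃ + ε₁ + ⋯ + ε_M < -1. Let v ∈ ℝ^M and ṽ ∈ ℝ, and set u_m = v_m + iε_m for each m and ũ = ṽ + iε̃. Then ∫_{ℝ^{M+1}} (e^{x̃} - Σ_{m=1}^M e^{x_m} - 1)^+ · e^{-iũx̃} · e^{-i Σ_{m=1}^M u_m x_m} d^Mx dx̃ = Γ(i(ũ + Σ_{m=1}^M u_m) - 1) · ( ∏_{m=1}^M Γ(-iu_m) ) / Γ(iũ + 1). -/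
open MeasureTheory Set

noncomputable section

lemma cpow_pos_eq {x : ℝ} (hx : 0 < x) (w : ℂ) :
    (x : ℂ) ^ w = Complex.exp (w * (Real.log x : ℂ)) := by
  rw [Complex.cpow_def_of_ne_zero (by exact_mod_cast hx.ne' : (x:ℂ) ≠ 0),
    Complex.ofReal_log hx.le, mul_comm]

lemma Gamma_ne_zero_re_pos {z : ℂ} (h : 0 < z.re) : Complex.Gamma z ≠ 0 := by
  apply Complex.Gamma_ne_zero
  intro m hm
  have h2 : z.re = (-(m:ℂ)).re := by rw [hm]
  simp only [Complex.neg_re, Complex.natCast_re] at h2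
  have h3 : (0:ℝ) ≤ m := Nat.cast_nonneg m
  linarith

lemma norm_cexp_mul (b : ℂ) (t : ℝ) : ‖Complex.exp (b * t)‖ = Real.exp (b.re * t) := by
  rw [Complex.norm_exp]
  congr 1
  simp [Complex.mul_re]

lemma norm_cpow_pos {r : ℝ} (hr : 0 < r) (s : ℂ) : ‖(r : ℂ) ^ (-s)‖ = r ^ (-s.re) := by
  rw [cpow_pos_eq hr, Complex.norm_exp, Real.rpow_def_of_pos hr]
  congr 1
  simp [Complex.mul_re]
  ring

lemma cont_cpow_pos {α : Type*} [TopologicalSpace α] {F : α → ℝ} (hF : Continuous F)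
    (hpos : ∀ x, 0 < F x) (w : ℂ) :
    Continuous (fun x => ((F x : ℝ) : ℂ) ^ w) := by
  have h : (fun x => ((F x : ℝ) : ℂ) ^ w) = fun x => Complex.exp (w * (Real.log (F x) : ℂ)) := by
    funext x; exact cpow_pos_eq (hpos x) w
  rw [h]
  apply Complex.continuous_exp.comp
  apply continuous_const.mul
  apply Complex.continuous_ofReal.comp
  exact continuous_iff_continuousAt.2 fun x => (Real.continuousAt_log (hpos x).ne').comp
    hF.continuousAt

-- auxiliary lemmas
lemma ofReal_pos_eq {x : ℝ} (hx : 0 < x) :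
    (x : ℂ) = Complex.exp ((Real.log x : ℂ)) := by
  rw [← Complex.ofReal_exp, Real.exp_log hx]

lemma cpow_cancel {x : ℝ} (hx : 0 < x) (w : ℂ) : (x:ℂ)^(-w) * (x:ℂ)^w = 1 := by
  rw [cpow_pos_eq hx, cpow_pos_eq hx, ← Complex.exp_add]
  have : -w * (Real.log x : ℂ) + w * (Real.log x : ℂ) = 0 := by ring
  rw [this, Complex.exp_zero]

lemma lemA {c s : ℂ} (hc : 0 < c.re) (hcs : c.re < s.re) {A : ℝ} (hA : 0 < A) :
    Integrable (fun t : ℝ => Complex.exp (c * t) * ((A + Real.exp t : ℝ) : ℂ) ^ (-s)) ∧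
    ∫ t : ℝ, Complex.exp (c * t) * ((A + Real.exp t : ℝ) : ℂ) ^ (-s)
      = (A : ℂ) ^ (c - s) * Complex.Gamma c * Complex.Gamma (s - c) / Complex.Gamma s := by
  set φ : ℝ → ℝ := fun t => Real.exp t / (A + Real.exp t) with hφ
  set φ' : ℝ → ℝ := fun t => A * Real.exp t / (A + Real.exp t) ^ 2 with hφ'
  have hD : ∀ t : ℝ, 0 < A + Real.exp t := fun t => by positivity
  have hderiv : ∀ t ∈ (univ : Set ℝ), HasDerivWithinAt φ (φ' t) univ t := by
    intro t _
    have h := (Real.hasDerivAt_exp t).div ((hasDerivAt_const t A).add (Real.hasDerivAt_exp t))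
      (hD t).ne'
    simp only [zero_add, Pi.add_apply] at h
    have : Real.exp t * (A + Real.exp t) - Real.exp t * Real.exp t = A * Real.exp t := by ring
    rw [this] at h
    exact h.hasDerivWithinAt
  have hinj : InjOn φ univ := by
    have hm : StrictMono φ := by
      intro t u htu
      have h1 := Real.exp_lt_exp.2 htu
      rw [hφ, div_lt_div_iff₀ (hD t) (hD u)]
      nlinarith [Real.exp_pos t, Real.exp_pos u]
    exact hm.injective.injOn
  have hrange : φ '' univ = Ioo (0:ℝ) 1 := by
    rw [image_univ]
    ext y
    constructor
    · rintro ⟨t, rfl⟩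
      exact ⟨div_pos (Real.exp_pos t) (hD t), (div_lt_one (hD t)).2 (by linarith [Real.exp_pos t])⟩
    · rintro ⟨hy0, hy1⟩
      refine ⟨Real.log (A * y / (1 - y)), ?_⟩
      have h1y : (0:ℝ) < 1 - y := by linarith
      have hpos : 0 < A * y / (1 - y) := div_pos (by positivity) h1y
      simp only [hφ, Real.exp_log hpos]
      rw [show A + A * y / (1 - y) = A / (1 - y) by field_simp; ring]
      rw [div_div_div_cancel_right₀ h1y.ne']
      exact mul_div_cancel_left₀ y hA.ne'
  set g : ℝ → ℂ := fun x => (x : ℂ) ^ (c - 1) * (1 - (x : ℂ)) ^ (s - c - 1) with hg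
  have key : ∀ t : ℝ, |φ' t| • g (φ t)
      = (A : ℂ) ^ (s - c) * (Complex.exp (c * t) * ((A + Real.exp t : ℝ) : ℂ) ^ (-s)) := by
    intro t
    have hE := Real.exp_pos t
    have hDt := hD t
    have h1 : 0 < φ t := div_pos hE hDt
    have h2 : 0 < 1 - φ t := by
      have : φ t < 1 := (div_lt_one hDt).2 (by linarith)
      linarith
    have hφ'pos : 0 < φ' t := by rw [hφ']; positivity
    have h1mφ : 1 - φ t = A / (A + Real.exp t) := by
      rw [hφ]; field_simp; ring
    have hcast : (1 : ℂ) - ((φ t : ℝ) : ℂ) = ((1 - φ t : ℝ) : ℂ) := by push_cast; ring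
    rw [hg]
    simp only [Complex.real_smul, abs_of_pos hφ'pos]
    rw [hcast, cpow_pos_eq h1, cpow_pos_eq h2, ofReal_pos_eq hφ'pos,
      cpow_pos_eq hA, cpow_pos_eq hDt, ← Complex.exp_add, ← Complex.exp_add,
      ← Complex.exp_add, ← Complex.exp_add]
    congr 1
    rw [h1mφ, hφ', hφ]
    rw [Real.log_div (by positivity) hDt.ne', Real.log_div hA.ne' hDt.ne',
      Real.log_div (by positivity) (by positivity), Real.log_mul hA.ne' hE.ne',
      Real.log_exp, Real.log_pow]
    push_cast
    ring
  have hMS : MeasurableSet (univ : Set ℝ) := MeasurableSet.univ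
  have hbeta : IntegrableOn g (Ioo (0:ℝ) 1) := by
    have h := Complex.betaIntegral_convergent hc
      (by simp only [Complex.sub_re]; linarith : 0 < (s - c).re)
    rw [intervalIntegrable_iff] at h
    rw [uIoc_of_le zero_le_one] at h
    exact h.mono_set Ioo_subset_Ioc_self
  have hint : Integrable (fun t : ℝ => Complex.exp (c * t) * ((A + Real.exp t : ℝ) : ℂ) ^ (-s)) := by
    have h := (integrableOn_image_iff_integrableOn_abs_deriv_smul hMS hderiv hinj g).1
      (by rwa [hrange])
    rw [integrableOn_univ] at h
    have h2 := h.const_mul ((A : ℂ) ^ (c - s))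
    have heq : (fun t : ℝ => (A:ℂ)^(c-s) * (|φ' t| • g (φ t)))
        = (fun t : ℝ => Complex.exp (c * t) * ((A + Real.exp t : ℝ) : ℂ) ^ (-s)) := by
      funext t
      rw [key t, ← mul_assoc, show c - s = -(s-c) by ring, cpow_cancel hA, one_mul]
    rwa [heq] at h2
  refine ⟨hint, ?_⟩
  have him := integral_image_eq_integral_abs_deriv_smul hMS hderiv hinj g
  rw [hrange, Measure.restrict_univ] at him
  have hbval : ∫ x in Ioo (0:ℝ) 1, g x = Complex.betaIntegral c (s - c) := by
    rw [Complex.betaIntegral, intervalIntegral.integral_of_le zero_le_one,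
      integral_Ioc_eq_integral_Ioo]
  rw [hbval] at him
  have him2 : Complex.betaIntegral c (s - c)
      = (A : ℂ) ^ (s - c) * ∫ t : ℝ, Complex.exp (c * t) * ((A + Real.exp t : ℝ) : ℂ) ^ (-s) := by
    rw [him, ← integral_const_mul]
    congr 1; funext t; exact key t
  have hGamma : Complex.Gamma c * Complex.Gamma (s - c)
      = Complex.Gamma s * ((A : ℂ) ^ (s - c) * ∫ t : ℝ, Complex.exp (c * t) * ((A + Real.exp t : ℝ) : ℂ) ^ (-s)) := by
    have h := Complex.Gamma_mul_Gamma_eq_betaIntegral hc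
      (by simp only [Complex.sub_re]; linarith : 0 < (s - c).re)
    rw [add_sub_cancel] at h
    rw [h, him2]
  have hGs : Complex.Gamma s ≠ 0 := by
    apply Complex.Gamma_ne_zero
    intro m h
    have h2 : s.re = (-(m:ℂ)).re := by rw [h]
    simp only [Complex.neg_re, Complex.natCast_re] at h2
    have h3 : (0:ℝ) ≤ m := Nat.cast_nonneg m
    linarith [hc.trans hcs]
  have hcancel : (A:ℂ)^(c-s) * (A:ℂ)^(s-c) = 1 := by
    rw [show c - s = -(s-c) by ring]; exact cpow_cancel hA _
  rw [eq_div_iff hGs]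
  calc (∫ t : ℝ, Complex.exp (c * t) * ((A + Real.exp t : ℝ) : ℂ) ^ (-s)) * Complex.Gamma s
      = (A:ℂ)^(c-s) * (Complex.Gamma s * ((A:ℂ)^(s-c) * ∫ t : ℝ, Complex.exp (c * t) * ((A + Real.exp t : ℝ) : ℂ) ^ (-s))) := by
        rw [show ∀ X : ℂ, (A:ℂ)^(c-s) * (Complex.Gamma s * ((A:ℂ)^(s-c) * X)) = ((A:ℂ)^(c-s) * (A:ℂ)^(s-c)) * X * Complex.Gamma s from fun X => by ring, hcancel, one_mul]
    _ = (A:ℂ)^(c-s) * (Complex.Gamma c * Complex.Gamma (s - c)) := by rw [← hGamma]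
    _ = (A:ℂ)^(c-s) * Complex.Gamma c * Complex.Gamma (s - c) := by ring

lemma cast_int_aux {σ τ : ℝ} {r : ℝ} (hr : 0 < r) (t : ℝ) :
    Complex.exp ((σ : ℂ) * t) * ((r : ℝ) : ℂ) ^ (-(τ:ℂ))
      = ((Real.exp (σ * t) * r ^ (-τ) : ℝ) : ℂ) := by
  rw [show -(τ:ℂ) = ((-τ : ℝ) : ℂ) by push_cast; ring, ← Complex.ofReal_cpow hr.le]
  push_cast [Complex.ofReal_exp]
  ring

lemma lemC (M : ℕ) :
    ∀ (c : Fin M → ℂ) (s : ℂ) (A : ℝ), 0 < A →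
    (∀ m, 0 < (c m).re) → (∑ m, (c m).re) < s.re →
    Integrable (fun y : Fin M → ℝ =>
      (∏ m, Complex.exp (c m * (y m : ℝ))) * (((A + ∑ m, Real.exp (y m) : ℝ)) : ℂ) ^ (-s)) ∧
    (∫ y : Fin M → ℝ,
      (∏ m, Complex.exp (c m * (y m : ℝ))) * (((A + ∑ m, Real.exp (y m) : ℝ)) : ℂ) ^ (-s))
      = (A : ℂ) ^ ((∑ m, c m) - s) * (∏ m, Complex.Gamma (c m)) * Complex.Gamma (s - ∑ m, c m)
          / Complex.Gamma s := by
  induction M with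
  | zero =>
    intro c s A hA hc hsum
    simp only [Finset.univ_eq_empty, Finset.prod_empty, Finset.sum_empty, one_mul, add_zero,
      zero_sub, sub_zero] at *
    have hprob : IsProbabilityMeasure (volume : Measure (Fin 0 → ℝ)) := by
      constructor
      rw [MeasureTheory.volume_pi, Measure.pi_univ]
      simp
    have hΓs : Complex.Gamma s ≠ 0 := Gamma_ne_zero_re_pos hsum
    constructor
    · exact integrable_const _
    · rw [integral_const]
      simp only [measureReal_def, measure_univ, ENNReal.toReal_one, one_smul]
      rw [mul_div_assoc, div_self hΓs, mul_one]
      exact (mul_one _).symm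
  | succ M ih =>
    intro c s A hA hc hsum
    set σ0 : ℝ := (c 0).re with hσ0
    set ct : Fin M → ℂ := fun m => c m.succ with hct
    set σ : Fin M → ℝ := fun m => (ct m).re with hσ
    have hsum_split : (∑ m : Fin (M+1), (c m).re) = σ0 + ∑ m : Fin M, σ m := by
      rw [Fin.sum_univ_succ]
    have hσ0pos : 0 < σ0 := hc 0
    have hσpos : ∀ m, 0 < (ct m).re := fun m => hc m.succ
    have hsum' : (∑ m : Fin M, (ct m).re) < s.re := by
      have : (∑ m : Fin M, σ m) < s.re := by rw [hsum_split] at hsum; linarith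
      exact this
    set σsum : ℝ := ∑ m : Fin M, σ m with hσsum
    have hσsumeq : ∑ m : Fin M, (ct m).re = σsum := rfl
    -- the function on the product space
    set g : ℝ × (Fin M → ℝ) → ℂ := fun p =>
      Complex.exp (c 0 * p.1) *
        ((∏ m, Complex.exp (ct m * (p.2 m : ℝ))) *
          (((A + Real.exp p.1 + ∑ m, Real.exp (p.2 m) : ℝ)) : ℂ) ^ (-s)) with hg
    have hApos : ∀ t : ℝ, 0 < A + Real.exp t := fun t => by positivity
    have hDpos : ∀ p : ℝ × (Fin M → ℝ), 0 < A + Real.exp p.1 + ∑ m, Real.exp (p.2 m) := by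
      intro p
      have h1 : (0:ℝ) ≤ ∑ m, Real.exp (p.2 m) :=
        Finset.sum_nonneg fun m _ => (Real.exp_pos _).le
      have := Real.exp_pos p.1
      linarith
    have hgcont : Continuous g := by
      apply Continuous.mul
      · exact Complex.continuous_exp.comp (continuous_const.mul
          (Complex.continuous_ofReal.comp continuous_fst))
      apply Continuous.mul
      · apply continuous_finset_prod
        intro m _
        exact Complex.continuous_exp.comp (continuous_const.mul
          (Complex.continuous_ofReal.comp ((continuous_apply m).comp continuous_snd)))
      · apply cont_cpow_pos _ hDpos
        apply Continuous.add
        · exact continuous_const.add (Real.continuous_exp.comp continuous_fst)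
        · exact continuous_finset_sum _ fun m _ =>
            Real.continuous_exp.comp ((continuous_apply m).comp continuous_snd)
    -- slices are integrable, with known values
    have hslice : ∀ t : ℝ,
        Integrable (fun y : Fin M → ℝ => g (t, y)) ∧
        (∫ y : Fin M → ℝ, g (t, y))
          = Complex.exp (c 0 * t) * (((A + Real.exp t : ℝ)) : ℂ) ^ ((∑ m, ct m) - s)
            * (∏ m, Complex.Gamma (ct m)) * Complex.Gamma (s - ∑ m, ct m) / Complex.Gamma s := by
      intro t
      obtain ⟨hint, hval⟩ := ih ct s (A + Real.exp t) (hApos t) hσpos hsum'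
      constructor
      · have h0 := hint.const_mul (Complex.exp (c 0 * (t:ℂ)))
        exact h0.congr (Filter.Eventually.of_forall fun y => rfl)
      · rw [hg]
        simp only
        rw [integral_const_mul, hval]
        ring
    -- norm of slices
    have hnorm : ∀ (t : ℝ) (y : Fin M → ℝ),
        ‖g (t, y)‖ = Real.exp (σ0 * t) *
          ((∏ m, Real.exp (σ m * y m)) *
            (A + Real.exp t + ∑ m, Real.exp (y m)) ^ (-s.re)) := by
      intro t y
      rw [hg]
      simp only
      rw [norm_mul, norm_mul, norm_cexp_mul, norm_prod, norm_cpow_pos (hDpos (t, y))]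
      congr 1
      congr 1
      apply Finset.prod_congr rfl
      intro m _
      exact norm_cexp_mul _ _
    -- value of the integral of the norm of a slice
    set Kr : ℝ := (∏ m, Real.Gamma (σ m)) * Real.Gamma (s.re - σsum) / Real.Gamma s.re with hKr
    have hnormval : ∀ t : ℝ,
        (∫ y : Fin M → ℝ, ‖g (t, y)‖)
          = Real.exp (σ0 * t) * ((A + Real.exp t) ^ (σsum - s.re) * Kr) := by
      intro t
      obtain ⟨hint2, hval2⟩ := ih (fun m => ((σ m : ℝ) : ℂ)) ((s.re : ℝ) : ℂ) (A + Real.exp t)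
        (hApos t) (fun m => by simpa using hσpos m)
        (by simpa using hsum')
      -- the complex integrand is the coercion of the real one
      have hcast : ∀ y : Fin M → ℝ,
          (∏ m, Complex.exp (((σ m : ℝ):ℂ) * (y m : ℝ))) *
            (((A + Real.exp t + ∑ m, Real.exp (y m) : ℝ)) : ℂ) ^ (-((s.re : ℝ):ℂ))
          = (((∏ m, Real.exp (σ m * y m)) *
              (A + Real.exp t + ∑ m, Real.exp (y m)) ^ (-s.re) : ℝ) : ℂ) := by
        intro y
        rw [show (-((s.re:ℝ):ℂ)) = ((-s.re : ℝ) : ℂ) by push_cast; ring,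
          ← Complex.ofReal_cpow (hDpos (t, y)).le]
        push_cast [Complex.ofReal_exp]
        ring
      have hval3 : (∫ y : Fin M → ℝ, (((∏ m, Real.exp (σ m * y m)) *
              (A + Real.exp t + ∑ m, Real.exp (y m)) ^ (-s.re) : ℝ) : ℂ))
          = ((((A + Real.exp t) ^ (σsum - s.re) * Kr : ℝ)) : ℂ) := by
        rw [← integral_congr_ae (Filter.Eventually.of_forall hcast)] at *
        rw [hval2]
        have e1 : (∑ m : Fin M, ((σ m : ℝ):ℂ)) = ((σsum : ℝ) : ℂ) := by
          rw [hσsum]; push_cast; rfl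
        rw [e1, hKr]
        rw [show ((σsum:ℝ):ℂ) - ((s.re:ℝ):ℂ) = (((σsum - s.re : ℝ)):ℂ) by push_cast; ring,
          show ((s.re:ℝ):ℂ) - ((σsum:ℝ):ℂ) = (((s.re - σsum : ℝ)):ℂ) by push_cast; ring,
          ← Complex.ofReal_cpow (hApos t).le, Complex.Gamma_ofReal, Complex.Gamma_ofReal]
        rw [show (∏ m, Complex.Gamma ((σ m : ℝ):ℂ)) = ((∏ m, Real.Gamma (σ m) : ℝ) : ℂ) by
          push_cast [Complex.Gamma_ofReal]; rfl]
        push_cast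
        ring
      have hFint : Integrable (fun y : Fin M → ℝ => (((∏ m, Real.exp (σ m * y m)) *
              (A + Real.exp t + ∑ m, Real.exp (y m)) ^ (-s.re) : ℝ) : ℂ)) :=
        hint2.congr (Filter.Eventually.of_forall hcast)
      have h9 := integral_re hFint
      rw [hval3] at h9
      simp only [RCLike.re_to_complex, Complex.ofReal_re] at h9
      rw [funext fun y => hnorm t y, integral_const_mul, h9]
    -- integrability on the product space
    have hprod_int : Integrable g ((volume : Measure ℝ).prod (volume : Measure (Fin M → ℝ))) := by
      rw [← Measure.volume_eq_prod]
      refine (integrable_prod_iff hgcont.aestronglyMeasurable).2 ⟨?_, ?_⟩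
      · exact Filter.Eventually.of_forall fun t => (hslice t).1
      · obtain ⟨hintA, _⟩ := lemA (c := ((σ0:ℝ):ℂ)) (s := (((s.re - σsum : ℝ)):ℂ))
          (by simpa using hσ0pos) (by simp; rw [hsum_split] at hsum; linarith) hA
        have hcast1 : ∀ t : ℝ, Complex.exp (((σ0:ℝ):ℂ) * t) *
            ((A + Real.exp t : ℝ) : ℂ) ^ (-(((s.re - σsum : ℝ)):ℂ))
            = ((Real.exp (σ0 * t) * (A + Real.exp t) ^ (-(s.re - σsum)) : ℝ) : ℂ) :=
          fun t => cast_int_aux (hApos t) t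
        have hintR : Integrable (fun t : ℝ =>
            Real.exp (σ0 * t) * (A + Real.exp t) ^ (-(s.re - σsum))) := by
          have h5 := hintA.congr (Filter.Eventually.of_forall hcast1)
          have h6 := h5.re
          refine h6.congr (Filter.Eventually.of_forall fun t => ?_)
          simp only [RCLike.re_to_complex, Complex.ofReal_re]
        have h7 := hintR.mul_const Kr
        refine (h7.congr (Filter.Eventually.of_forall fun t => ?_)).congr
          (Filter.Eventually.of_forall fun t => (hnormval t).symm)
        rw [show -(s.re - σsum) = σsum - s.re by ring]
        ring
    -- value on the product space
    have hprod_val : (∫ p : ℝ × (Fin M → ℝ), g p ∂((volume : Measure ℝ).prod volume))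
        = (A : ℂ) ^ ((∑ m, c m) - s) * (∏ m, Complex.Gamma (c m))
            * Complex.Gamma (s - ∑ m, c m) / Complex.Gamma s := by
      rw [integral_prod g hprod_int]
      have e1 : ∀ t : ℝ, (∫ y : Fin M → ℝ, g (t, y))
          = ((∏ m, Complex.Gamma (ct m)) * Complex.Gamma (s - ∑ m, ct m) / Complex.Gamma s)
            * (Complex.exp (c 0 * t) * (((A + Real.exp t : ℝ)) : ℂ) ^ (-(s - ∑ m, ct m))) := by
        intro t
        rw [(hslice t).2, show (∑ m, ct m) - s = -(s - ∑ m, ct m) by ring]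
        ring
      rw [integral_congr_ae (Filter.Eventually.of_forall e1), integral_const_mul]
      have hre : (s - ∑ m, ct m).re = s.re - σsum := by
        rw [Complex.sub_re, Complex.re_sum]
      have hkey : σ0 + σsum < s.re := by rw [hsum_split] at hsum; exact hsum
      obtain ⟨_, hvalA⟩ := lemA (c := c 0) (s := s - ∑ m, ct m)
        (hc 0) (by rw [hre]; linarith) hA
      rw [hvalA]
      have hΓs : Complex.Gamma s ≠ 0 := Gamma_ne_zero_re_pos (by
        have h0 : (0:ℝ) ≤ σsum := Finset.sum_nonneg fun m _ => (hσpos m).le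
        linarith [hsum'])
      have hΓt : Complex.Gamma (s - ∑ m, ct m) ≠ 0 := Gamma_ne_zero_re_pos (by
        rw [hre]; linarith [hsum'])
      rw [Fin.sum_univ_succ (f := c), Fin.prod_univ_succ (f := fun m => Complex.Gamma (c m))]
      have harg : s - (∑ m, ct m) - c 0 = s - (c 0 + ∑ m, ct m) := by ring
      have harg2 : c 0 - (s - ∑ m, ct m) = c 0 + (∑ m, ct m) - s := by ring
      rw [harg, harg2]
      field_simp
      ring
    -- transfer to the pi space
    have hmp := measurePreserving_piFinSuccAbove (fun _ : Fin (M+1) => (volume : Measure ℝ)) 0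
    set e := MeasurableEquiv.piFinSuccAbove (fun _ : Fin (M+1) => ℝ) 0 with he
    have hfe : ∀ y : Fin (M+1) → ℝ,
        (∏ m, Complex.exp (c m * (y m : ℝ))) *
          (((A + ∑ m, Real.exp (y m) : ℝ)) : ℂ) ^ (-s) = g (e y) := by
      intro y
      have he1 : e y = (y 0, fun j => y (Fin.succAbove 0 j)) := rfl
      rw [he1, hg]
      simp only [Fin.zero_succAbove]
      rw [Fin.prod_univ_succ (f := fun m => Complex.exp (c m * (y m : ℝ))),
        Fin.sum_univ_succ (f := fun m => Real.exp (y m))]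
      rw [← add_assoc]
      ring
    have hπ : (volume : Measure (Fin (M+1) → ℝ)) = Measure.pi fun _ => volume :=
      MeasureTheory.volume_pi
    have hπ' : (volume : Measure (Fin M → ℝ)) = Measure.pi fun _ => volume :=
      MeasureTheory.volume_pi
    constructor
    · rw [funext hfe, hπ]
      have h2 : Integrable g ((volume : Measure ℝ).prod (Measure.pi fun _ : Fin M => volume)) := by
        rw [← hπ']; exact hprod_int
      have h3 := (hmp.integrable_comp_emb (MeasurableEquiv.measurableEmbedding _)).2 h2
      exact h3.congr (Filter.Eventually.of_forall fun y => rfl)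
    · rw [funext hfe, hπ]
      have h8 := hmp.integral_comp' (f := e) g
      rw [h8, ← hπ']
      exact hprod_val
lemma cexp_tendsto_zero {b : ℂ} (hb : b.re < 0) :
    Filter.Tendsto (fun x : ℝ => Complex.exp (b * x)) Filter.atTop (nhds 0) := by
  rw [tendsto_zero_iff_norm_tendsto_zero]
  have heq : (fun x : ℝ => ‖Complex.exp (b * x)‖) = fun x : ℝ => Real.exp (b.re * x) := by
    funext x
    rw [Complex.norm_exp]
    congr 1
    simp [Complex.mul_re]
  rw [heq]
  exact Real.tendsto_exp_atBot.comp <| (Filter.tendsto_const_mul_atBot_of_neg hb).mpr Filter.tendsto_id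

lemma cexp_integrableOn {b : ℂ} (hb : b.re < 0) (L : ℝ) :
    IntegrableOn (fun x : ℝ => Complex.exp (b * x)) (Ioi L) := by
  refine Integrable.mono' (g := fun x : ℝ => Real.exp (b.re * x))
    ?_ ?_ ?_
  · have h := exp_neg_integrableOn_Ioi L (neg_pos.2 hb)
    refine h.congr_fun (fun x _ => ?_) measurableSet_Ioi
    ring_nf
  · exact (Complex.continuous_exp.comp (continuous_const.mul Complex.continuous_ofReal)).aestronglyMeasurable.restrict
  · filter_upwards with x
    rw [Complex.norm_exp]
    apply le_of_eq
    congr 1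
    simp [Complex.mul_re]

lemma cexp_hasDerivAt (b : ℂ) (x : ℝ) :
    HasDerivAt (fun x : ℝ => Complex.exp (b * x)) (b * Complex.exp (b * x)) x := by
  have h : HasDerivAt (fun z : ℂ => Complex.exp (b * z)) (b * Complex.exp (b * (x:ℂ))) (x:ℂ) := by
    have h2 := (Complex.hasDerivAt_exp (b * (x:ℂ))).comp (x:ℂ)
      ((hasDerivAt_id (x:ℂ)).const_mul b)
    exact h2.congr_deriv (by ring)
  exact h.comp_ofReal

lemma lemB {a : ℂ} (ha : a.re < -1) {K : ℝ} (hK : 0 < K) :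
    Integrable (fun x : ℝ => ((max (Real.exp x - K) 0 : ℝ) : ℂ) * Complex.exp (a * x)) ∧
    ∫ x : ℝ, ((max (Real.exp x - K) 0 : ℝ) : ℂ) * Complex.exp (a * x)
      = (K : ℂ) ^ (a + 1) / (a * (a + 1)) := by
  set L := Real.log K with hL
  set g : ℝ → ℂ := fun x => Complex.exp ((a+1) * x) - (K:ℂ) * Complex.exp (a * x) with hg
  have hexp_gt : ∀ x : ℝ, x ∈ Ioi L → K < Real.exp x := by
    intro x hx
    have := Real.exp_lt_exp.2 (hx : L < x)
    rwa [Real.exp_log hK] at this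
  have hfind : (fun x : ℝ => ((max (Real.exp x - K) 0 : ℝ) : ℂ) * Complex.exp (a * x))
      = (Ioi L).indicator g := by
    funext x
    rw [indicator_apply]
    by_cases hx : x ∈ Ioi L
    · rw [if_pos hx, hg]
      have h1 : max (Real.exp x - K) 0 = Real.exp x - K :=
        max_eq_left (by linarith [hexp_gt x hx])
      rw [h1]
      push_cast
      rw [add_mul, one_mul, Complex.exp_add]
      ring
    · rw [if_neg hx]
      have hxle : x ≤ L := not_lt.1 hx
      have : Real.exp x ≤ K := by
        have := Real.exp_le_exp.2 hxle
        rwa [Real.exp_log hK] at this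
      have h1 : max (Real.exp x - K) 0 = 0 := max_eq_right (by linarith)
      rw [h1]
      simp
  have ha1 : (a+1).re < 0 := by simp [Complex.add_re]; linarith
  have ha0 : a.re < 0 := by linarith
  have hgint : IntegrableOn g (Ioi L) :=
    (cexp_integrableOn ha1 L).sub ((cexp_integrableOn ha0 L).const_mul (K:ℂ))
  have hane : a ≠ 0 := fun h => by simp [h] at ha0
  have ha1ne : a + 1 ≠ 0 := fun h => by
    have : (a+1).re = 0 := by rw [h]; simp
    linarith
  set F : ℝ → ℂ := fun x => Complex.exp ((a+1) * x) / (a+1) - (K:ℂ) * Complex.exp (a * x) / a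
    with hF
  have hderiv : ∀ x ∈ Ici L, HasDerivAt F (g x) x := by
    intro x _
    have h1 := ((cexp_hasDerivAt (a+1) x).div_const (a+1))
    have h2 := (((cexp_hasDerivAt a x).const_mul (K:ℂ)).div_const a)
    have h := h1.sub h2
    refine h.congr_deriv ?_
    rw [hg]
    field_simp
  have htend : Filter.Tendsto F Filter.atTop (nhds 0) := by
    have h1 := (cexp_tendsto_zero ha1).div_const (a+1)
    have h2 := ((cexp_tendsto_zero ha0).const_mul (K:ℂ)).div_const a
    have := h1.sub h2
    simpa using this
  have hval := integral_Ioi_of_hasDerivAt_of_tendsto' hderiv hgint htend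
  have hFL : F L = -((K:ℂ) ^ (a + 1) / (a * (a + 1))) := by
    rw [hF, hL]
    simp only
    rw [cpow_pos_eq hK]
    have e1 : Complex.exp ((a+1) * (Real.log K : ℂ)) = Complex.exp (a * (Real.log K :ℂ)) * (K:ℂ) := by
      rw [add_mul, one_mul, Complex.exp_add, ← Complex.ofReal_exp, Real.exp_log hK]
    rw [e1]
    field_simp
    ring
  constructor
  · rw [hfind, integrable_indicator_iff measurableSet_Ioi]
    exact hgint
  · rw [hfind, integral_indicator measurableSet_Ioi, hval, hFL]
    ring

/-- The Fourier transform of the `M`-asset spread option payoff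
`(e^{x̃} - Σ_m e^{x_m} - 1)⁺` along the shifted contour `u_m = v_m + iε_m`,
`ũ = ṽ + iε̃` (with `ε_m > 0` and `ε̃ + Σ_m ε_m < -1`) equals
`Γ(i(ũ + Σ u_m) - 1)(∏_m Γ(-iu_m))/Γ(iũ + 1)`. -/
theorem multiasset_spread_payoff_fourier_transform
    (M : ℕ) (hM : 1 ≤ M) (ε : Fin M → ℝ) (hε : ∀ m, 0 < ε m)
    (εt : ℝ) (hsum : εt + ∑ m, ε m < -1) (v : Fin M → ℝ) (vt : ℝ) :
    (∫ x : (Fin M → ℝ) × ℝ,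
        ((max (Real.exp x.2 - ∑ m, Real.exp (x.1 m) - 1) 0 : ℝ) : ℂ) *
          Complex.exp (-Complex.I * ((vt : ℂ) + Complex.I * (εt : ℂ)) * (x.2 : ℂ)) *
          Complex.exp
            (-Complex.I *
              ∑ m, ((v m : ℂ) + Complex.I * (ε m : ℂ)) * ((x.1 m : ℝ) : ℂ))) =
      Complex.Gamma
          (Complex.I *
              (((vt : ℂ) + Complex.I * (εt : ℂ)) +
                ∑ m, ((v m : ℂ) + Complex.I * (ε m : ℂ))) - 1) *
        (∏ m, Complex.Gamma (-Complex.I * ((v m : ℂ) + Complex.I * (ε m : ℂ)))) /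
        Complex.Gamma (Complex.I * ((vt : ℂ) + Complex.I * (εt : ℂ)) + 1) := by
  have hεsum_nonneg : 0 ≤ ∑ m, ε m := Finset.sum_nonneg fun m _ => (hε m).le
  have hεtlt : εt < -1 := by linarith
  set ut : ℂ := (vt : ℂ) + Complex.I * (εt : ℂ) with hut
  set u : Fin M → ℂ := fun m => (v m : ℂ) + Complex.I * (ε m : ℂ) with hu
  set a : ℂ := -Complex.I * ut with ha
  set cc : Fin M → ℂ := fun m => -Complex.I * u m with hcc
  set s : ℂ := Complex.I * ut - 1 with hs
  have has : a + 1 = -s := by rw [ha, hs]; ring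
  have hare : a.re = εt := by
    rw [ha, hut]; simp [Complex.mul_re]
  have hcre : ∀ m, (cc m).re = ε m := by
    intro m; rw [hcc]; simp [hu, Complex.mul_re]
  have hsre : s.re = -εt - 1 := by
    rw [hs, hut]; simp [Complex.mul_re]
  have haneg : a.re < -1 := by rw [hare]; exact hεtlt
  set F : (Fin M → ℝ) × ℝ → ℂ := fun x =>
    ((max (Real.exp x.2 - ∑ m, Real.exp (x.1 m) - 1) 0 : ℝ) : ℂ) *
      Complex.exp (a * (x.2 : ℂ)) *
      Complex.exp (-Complex.I * ∑ m, u m * ((x.1 m : ℝ) : ℂ)) with hF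
  set K : (Fin M → ℝ) → ℝ := fun y => 1 + ∑ m, Real.exp (y m) with hK
  have hKpos : ∀ y, 0 < K y := by
    intro y
    have : (0:ℝ) ≤ ∑ m, Real.exp (y m) := Finset.sum_nonneg fun m _ => (Real.exp_pos _).le
    rw [hK]; simp only; linarith
  set P : (Fin M → ℝ) → ℂ := fun y => ∏ m, Complex.exp (cc m * ((y m : ℝ) : ℂ)) with hP
  have hPF : ∀ y : Fin M → ℝ, Complex.exp (-Complex.I * ∑ m, u m * ((y m : ℝ) : ℂ)) = P y := by
    intro y
    rw [hP]
    simp only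
    rw [Finset.mul_sum, ← Complex.exp_sum]
    congr 1
    apply Finset.sum_congr rfl
    intro m _
    rw [hcc]; ring
  have hFsplit : ∀ (y : Fin M → ℝ) (t : ℝ),
      F (y, t) = (((max (Real.exp t - K y) 0 : ℝ) : ℂ) * Complex.exp (a * (t : ℂ))) * P y := by
    intro y t
    rw [hF]
    simp only
    rw [hPF y]
    have : Real.exp t - ∑ m, Real.exp (y m) - 1 = Real.exp t - K y := by
      simp only [hK]; try ring
    rw [this]
  have hFcont : Continuous F := by
    rw [hF]
    apply Continuous.mul
    apply Continuous.mul
    · apply Complex.continuous_ofReal.comp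
      apply Continuous.max _ continuous_const
      apply Continuous.sub
      apply Continuous.sub
      · exact Real.continuous_exp.comp continuous_snd
      · exact continuous_finset_sum _ fun m _ =>
          Real.continuous_exp.comp ((continuous_apply m).comp continuous_fst)
      · exact continuous_const
    · exact Complex.continuous_exp.comp (continuous_const.mul
        (Complex.continuous_ofReal.comp continuous_snd))
    · apply Complex.continuous_exp.comp
      apply continuous_const.mul
      apply continuous_finset_sum
      intro m _
      exact continuous_const.mul (Complex.continuous_ofReal.comp
        ((continuous_apply m).comp continuous_fst))
  -- slices in t
  have hslice : ∀ y : Fin M → ℝ,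
      Integrable (fun t : ℝ => F (y, t)) ∧
      (∫ t : ℝ, F (y, t)) = ((K y : ℝ) : ℂ) ^ (a + 1) / (a * (a + 1)) * P y := by
    intro y
    obtain ⟨hi, hv⟩ := lemB haneg (hKpos y)
    constructor
    · exact (hi.mul_const (P y)).congr (Filter.Eventually.of_forall fun t => (hFsplit y t).symm)
    · rw [integral_congr_ae (Filter.Eventually.of_forall (hFsplit y)), integral_mul_const, hv]
  -- norm of F
  have hnormF : ∀ (y : Fin M → ℝ) (t : ℝ),
      ‖F (y, t)‖ = (max (Real.exp t - K y) 0 * Real.exp (εt * t)) *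
        ∏ m, Real.exp (ε m * y m) := by
    intro y t
    rw [hFsplit y t, norm_mul, norm_mul, hP, norm_prod]
    rw [Complex.norm_real, Real.norm_eq_abs, abs_of_nonneg (le_max_right _ _),
      norm_cexp_mul, hare]
    congr 1
    apply Finset.prod_congr rfl
    intro m _
    rw [norm_cexp_mul, hcre]
  -- the real 1-dim payoff integral
  have lemBr : ∀ Kv : ℝ, 0 < Kv →
      (∫ t : ℝ, max (Real.exp t - Kv) 0 * Real.exp (εt * t))
        = Kv ^ (εt + 1) / (εt * (εt + 1)) := by
    intro Kv hKv
    obtain ⟨hi, hv⟩ := lemB (a := (εt : ℂ)) (by simpa using hεtlt) hKv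
    have hcast : ∀ t : ℝ, ((max (Real.exp t - Kv) 0 : ℝ) : ℂ) * Complex.exp ((εt:ℂ) * t)
        = ((max (Real.exp t - Kv) 0 * Real.exp (εt * t) : ℝ) : ℂ) := by
      intro t
      push_cast [Complex.ofReal_exp]
      ring
    have hrhs : ((Kv : ℂ)) ^ ((εt:ℂ) + 1) / ((εt:ℂ) * ((εt:ℂ) + 1))
        = ((Kv ^ (εt + 1) / (εt * (εt + 1)) : ℝ) : ℂ) := by
      rw [show ((εt:ℂ) + 1) = ((εt + 1 : ℝ) : ℂ) by push_cast; ring,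
        ← Complex.ofReal_cpow hKv.le]
      push_cast
      ring
    have h9 := integral_re hi
    rw [hv, hrhs] at h9
    simp only [hcast, RCLike.re_to_complex, Complex.ofReal_re] at h9
    exact h9
  have hεtD : εt * (εt + 1) > 0 := mul_pos_of_neg_of_neg (by linarith) (by linarith)
  -- integral of norms over t, as a function of y
  have hnormint : ∀ y : Fin M → ℝ,
      (∫ t : ℝ, ‖F (y, t)‖)
        = ((∏ m, Real.exp (ε m * y m)) * (K y) ^ (εt + 1)) / (εt * (εt + 1)) := by
    intro y
    rw [integral_congr_ae (Filter.Eventually.of_forall fun t => hnormF y t),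
      integral_mul_const, lemBr (K y) (hKpos y)]
    ring
  -- integrability of y ↦ ∫ t ‖F (y, t)‖
  have houter : Integrable (fun y : Fin M → ℝ =>
      ((∏ m, Real.exp (ε m * y m)) * (K y) ^ (εt + 1)) / (εt * (εt + 1))) := by
    obtain ⟨hi, _⟩ := lemC M (fun m => ((ε m : ℝ) : ℂ)) ((( -εt - 1 : ℝ)) : ℂ) 1 one_pos
      (fun m => by simpa using hε m) (by simp; linarith)
    have hcast : ∀ y : Fin M → ℝ,
        (∏ m, Complex.exp (((ε m : ℝ):ℂ) * ((y m : ℝ) : ℂ))) *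
          (((1 + ∑ m, Real.exp (y m) : ℝ)) : ℂ) ^ (-(((-εt - 1:ℝ)):ℂ))
        = (((∏ m, Real.exp (ε m * y m)) * (K y) ^ (εt + 1) : ℝ) : ℂ) := by
      intro y
      simp only [hK]
      rw [show (-(((-εt - 1:ℝ)):ℂ)) = ((εt + 1 : ℝ) : ℂ) by push_cast; ring,
        ← Complex.ofReal_cpow (by positivity : (0:ℝ) ≤ 1 + ∑ m, Real.exp (y m))]
      push_cast [Complex.ofReal_exp]
      ring
    have h5 := hi.congr (Filter.Eventually.of_forall hcast)
    have h6 := h5.re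
    have h7 : Integrable (fun y : Fin M → ℝ =>
        (∏ m, Real.exp (ε m * y m)) * (K y) ^ (εt + 1)) := by
      refine h6.congr (Filter.Eventually.of_forall fun y => ?_)
      simp only [RCLike.re_to_complex, Complex.ofReal_re]
    exact h7.div_const _
  -- integrability of F on the product space
  have hFint : Integrable F ((volume : Measure (Fin M → ℝ)).prod (volume : Measure ℝ)) := by
    rw [← Measure.volume_eq_prod]
    refine (integrable_prod_iff hFcont.aestronglyMeasurable).2 ⟨?_, ?_⟩
    · exact Filter.Eventually.of_forall fun y => (hslice y).1
    · exact houter.congr (Filter.Eventually.of_forall fun y => (hnormint y).symm)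
  -- compute the integral
  have hmain : (∫ x : (Fin M → ℝ) × ℝ, F x)
      = (∏ m, Complex.Gamma (cc m)) * Complex.Gamma (s - ∑ m, cc m) / Complex.Gamma s
        / (a * (a + 1)) := by
    rw [Measure.volume_eq_prod, integral_prod F hFint]
    have e1 : ∀ y : Fin M → ℝ, (∫ t : ℝ, F (y, t))
        = (1 / (a * (a + 1))) * (P y * (((1 + ∑ m, Real.exp (y m) : ℝ)) : ℂ) ^ (-s)) := by
      intro y
      rw [(hslice y).2, has]
      have : K y = 1 + ∑ m, Real.exp (y m) := rfl
      rw [← this]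
      ring
    rw [integral_congr_ae (Filter.Eventually.of_forall e1), integral_const_mul]
    obtain ⟨_, hv⟩ := lemC M cc s 1 one_pos (fun m => by rw [hcre]; exact hε m)
      (by
        have : (∑ m, (cc m).re) = ∑ m, ε m := Finset.sum_congr rfl fun m _ => hcre m
        rw [this, hsre]; linarith)
    simp only [hP]
    rw [hv]
    rw [show ((1:ℝ):ℂ) = 1 by norm_num, Complex.one_cpow]
    ring
  have hIne : Complex.I * ut ≠ 0 := by
    intro h
    have : (Complex.I * ut).re = 0 := by rw [h]; simp
    rw [hut] at this
    simp [Complex.mul_re] at this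
    linarith
  have hIm1ne : Complex.I * ut - 1 ≠ 0 := by
    intro h
    have : (Complex.I * ut - 1).re = 0 := by rw [h]; simp
    rw [← hs, hsre] at this
    linarith
  have hΓs : Complex.Gamma s ≠ 0 := Gamma_ne_zero_re_pos (by rw [hsre]; linarith)
  have hane : a ≠ 0 := by
    intro h
    have : a.re = 0 := by rw [h]; simp
    rw [hare] at this; linarith
  have ha1ne : a + 1 ≠ 0 := by
    intro h
    have : (a+1).re = 0 := by rw [h]; simp
    simp only [Complex.add_re, Complex.one_re, hare] at this
    linarith
  -- Gamma recurrence: Γ(I ut + 1) = a (a+1) Γ s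
  have hrec : Complex.Gamma (Complex.I * ut + 1) = a * (a + 1) * Complex.Gamma s := by
    have h1 : Complex.Gamma (Complex.I * ut + 1)
        = (Complex.I * ut) * Complex.Gamma (Complex.I * ut) :=
      Complex.Gamma_add_one _ hIne
    have h2 : Complex.Gamma (Complex.I * ut)
        = (Complex.I * ut - 1) * Complex.Gamma (Complex.I * ut - 1) := by
      have h3 := Complex.Gamma_add_one (Complex.I * ut - 1) hIm1ne
      rw [show Complex.I * ut - 1 + 1 = Complex.I * ut by ring] at h3
      exact h3
    rw [h1, h2, ← hs, ha]
    ring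
  have harg : s - ∑ m, cc m = Complex.I * (ut + ∑ m, u m) - 1 := by
    rw [hs, hcc]
    have : (∑ m, -Complex.I * u m) = -Complex.I * ∑ m, u m := by
      rw [Finset.mul_sum]
    rw [this]
    ring
  calc (∫ x : (Fin M → ℝ) × ℝ,
        ((max (Real.exp x.2 - ∑ m, Real.exp (x.1 m) - 1) 0 : ℝ) : ℂ) *
          Complex.exp (-Complex.I * ut * (x.2 : ℂ)) *
          Complex.exp (-Complex.I * ∑ m, u m * ((x.1 m : ℝ) : ℂ)))
      = ∫ x : (Fin M → ℝ) × ℝ, F x := by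
        apply integral_congr_ae
        filter_upwards with x
        rw [hF]
    _ = (∏ m, Complex.Gamma (cc m)) * Complex.Gamma (s - ∑ m, cc m) / Complex.Gamma s
        / (a * (a + 1)) := hmain
    _ = Complex.Gamma (Complex.I * (ut + ∑ m, u m) - 1) * (∏ m, Complex.Gamma (-Complex.I * u m))
        / Complex.Gamma (Complex.I * ut + 1) := by
        rw [harg, hrec, hcc]
        field_simp
end
end
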